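/- arXiv:2305.05236 — 4 statements merged into one kernel-verified Lean document; each statement's English description precedes it below -/
import Mathlib

section
/- Let $\mathcal{M}$ be a finite set, $q \geq 2$, and $\chi : \mathbb{C}^{\mathcal{M}} \to \mathbb{R}$ a homogeneous polynomial of degree $2q$ commuting with the Euclidean norm, with $\|\chi\|_\infty < \infty$. Then for all $t \geq 0$, $u, v \in \mathbb{C}^{\mathcal{M}}$, the differential of the flow satisfies $\|\mathrm{d}\Phi_\chi^t(u)(v)\| \leq \exp(4q^2 t \|\chi\|_\infty \|u\|^{2q-2})\|v\|$. -/
open Function Set Filter Metric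
open scoped NNReal Topology

namespace Stmt4Aux

variable {M : Type*} [Fintype M]

lemma rinner_eq (x y : EuclideanSpace ℂ M) : (inner ℝ x y : ℝ) = (inner ℂ x y : ℂ).re := by
  simp [PiLp.inner_apply, Complex.re_sum]

lemma linear_eq_of_max {F : Type*} [NormedAddCommGroup F] [InnerProductSpace ℝ F]
    (φ : F →ₗ[ℝ] ℝ) (B : ℝ) (x : F) (hx : ‖x‖ = 1)
    (hb : ∀ v, |φ v| ≤ B * ‖v‖) (hB : φ x = B) (v : F) :
    φ v = B * (inner ℝ x v : ℝ) := by
  have hB0 : 0 ≤ B := by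
    have h := hb x
    rw [hx, mul_one] at h
    exact (abs_nonneg _).trans h
  rcases eq_or_lt_of_le hB0 with hB0' | hBpos
  · have h := hb v
    rw [← hB0', zero_mul] at h
    rw [abs_nonpos_iff.mp h, ← hB0', zero_mul]
  · set c : ℝ := (inner ℝ x v : ℝ) with hc
    set w : F := v - c • x with hw
    have hxw : (inner ℝ x w : ℝ) = 0 := by
      rw [hw, inner_sub_right, real_inner_smul_right, real_inner_self_eq_norm_sq, hx]
      ring
    have hkey : ∀ z : F, (inner ℝ x z : ℝ) = 0 → φ z = 0 := by
      intro z hz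
      have main : ∀ t : ℝ, 2 * B * (t * φ z) ≤ t ^ 2 * (B ^ 2 * ‖z‖ ^ 2) := by
        intro t
        have h1 : (φ (x + t • z)) ^ 2 ≤ B ^ 2 * ‖x + t • z‖ ^ 2 := by
          have h := hb (x + t • z)
          nlinarith [abs_nonneg (φ (x + t • z)), norm_nonneg (x + t • z),
            sq_abs (φ (x + t • z)), mul_nonneg hB0 (norm_nonneg (x + t • z))]
        have hzx : (inner ℝ z x : ℝ) = 0 := by rw [real_inner_comm]; exact hz
        have h2 : ‖x + t • z‖ ^ 2 = 1 + t ^ 2 * ‖z‖ ^ 2 := by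
          rw [← real_inner_self_eq_norm_sq, inner_add_add_self, real_inner_smul_left,
            real_inner_smul_right, real_inner_smul_left, real_inner_smul_right,
            real_inner_self_eq_norm_sq, real_inner_self_eq_norm_sq, hz, hzx, hx]
          ring
        have h3 : φ (x + t • z) = B + t * φ z := by
          rw [map_add, map_smul, hB]; simp
        rw [h3, h2] at h1
        nlinarith [sq_nonneg (t * φ z)]
      by_contra hne
      have hphi : 0 < φ z ^ 2 := by positivity
      set K : ℝ := B ^ 2 * ‖z‖ ^ 2 with hK
      have hK0 : 0 ≤ K := by positivity
      have hfor : ∀ s : ℝ, 0 < s → 2 * B ≤ s * K := by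
        intro s hs
        have h := main (s * φ z)
        nlinarith [mul_pos hs hphi]
      have hs : 0 < B / (K + 1) := by positivity
      have h2 := hfor _ hs
      have h3 : B / (K + 1) * (K + 1) = B := div_mul_cancel₀ B (by positivity)
      nlinarith [h2, h3, hK0, hBpos, hs]
    have hφw : φ w = 0 := hkey w hxw
    have hdec : φ v = φ w + c * φ x := by
      rw [hw, map_sub, map_smul]
      simp
    rw [hdec, hφw, hB, zero_add, mul_comm]

lemma sum_update_eq (n : ℕ) (f : Fin n → EuclideanSpace ℂ M) (i : Fin n)
    (v : EuclideanSpace ℂ M) : ∑ k, update f i v k = (∑ k, f k) + (v - f i) := by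
  have h : update f i v = fun k => f k + (if k = i then v - f i else 0) := by
    funext k
    rcases eq_or_ne k i with rfl | hk
    · simp
    · simp [update_of_ne hk, hk]
  rw [h, Finset.sum_add_distrib, Finset.sum_ite_eq' Finset.univ i]
  simp

lemma parabola_contradiction {d P : ℝ} (hP0 : 0 < P) (hP2 : P < 2)
    (e1 : 4 * d + 4 ≤ 2 * P * d + P ^ 2) (e2 : 0 ≤ 2 * P * d + P ^ 2) : False := by
  nlinarith [mul_le_mul_of_nonneg_left e1 hP0.le,
    mul_nonneg (by linarith : (0:ℝ) ≤ 4 - 2 * P) e2]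

lemma update_update_swap {α : Type*} [DecidableEq α] {β : Type*} (f : α → β) {i j : α}
    (hij : i ≠ j) (x y : β) :
    Function.update (Function.update f i x) j y ∘ (Equiv.swap i j) =
      Function.update (Function.update f i y) j x := by
  funext k
  rcases eq_or_ne k i with rfl | hk1
  · rw [comp_apply, Equiv.swap_apply_left, update_self, update_of_ne hij, update_self]
  · rcases eq_or_ne k j with rfl | hk2
    · rw [comp_apply, Equiv.swap_apply_right, update_of_ne hij, update_self, update_self]
    · rw [comp_apply, Equiv.swap_apply_of_ne_of_ne hk1 hk2, update_of_ne hk2,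
        update_of_ne hk1, update_of_ne hk2, update_of_ne hk1]

lemma banach_unit {n : ℕ} (hn : 0 < n)
    (L : ContinuousMultilinearMap ℝ (fun _ : Fin n => EuclideanSpace ℂ M) ℝ)
    (hsym : ∀ (σ : Equiv.Perm (Fin n)) (v : Fin n → EuclideanSpace ℂ M), L (v ∘ σ) = L v)
    (C : ℝ) (hC : ∀ u : EuclideanSpace ℂ M, ‖u‖ ≤ 1 → |L (fun _ => u)| ≤ C)
    (x : Fin n → EuclideanSpace ℂ M) (hx : ∀ i, ‖x i‖ = 1) : |L x| ≤ C := by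
  classical
  set S : Set (Fin n → EuclideanSpace ℂ M) := {z | ∀ i, ‖z i‖ = 1} with hSdef
  have hSc : IsCompact S := by
    have hSeq : S = Set.pi Set.univ (fun _ : Fin n => sphere (0 : EuclideanSpace ℂ M) 1) := by
      ext z
      simp [hSdef, Set.mem_pi, mem_sphere_zero_iff_norm]
    rw [hSeq]
    exact isCompact_univ_pi fun i => isCompact_sphere 0 1
  have hxS : x ∈ S := hx
  have hcont : Continuous fun z : Fin n → EuclideanSpace ℂ M => |L z| :=
    continuous_abs.comp L.cont
  obtain ⟨x0, hx0S, hmax⟩ := hSc.exists_isMaxOn ⟨x, hxS⟩ hcont.continuousOn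
  set B := |L x0| with hBdef
  have hxB : |L x| ≤ B := hmax hxS
  suffices hBC : B ≤ C by exact hxB.trans hBC
  have hB0 : 0 ≤ B := abs_nonneg _
  -- second maximization
  set K : Set (Fin n → EuclideanSpace ℂ M) := S ∩ {z | |L z| = B} with hKdef
  have hKc : IsCompact K := hSc.inter_right (isClosed_eq hcont continuous_const)
  have hgc : Continuous fun z : Fin n → EuclideanSpace ℂ M => ‖∑ i, z i‖ ^ 2 :=
    (continuous_norm.comp (continuous_finset_sum _ fun i _ => continuous_apply i)).pow 2
  obtain ⟨w, hwK, hwmax⟩ := hKc.exists_isMaxOn ⟨x0, hx0S, rfl⟩ hgc.continuousOn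
  obtain ⟨hwS, hwB⟩ := hwK
  -- sign
  obtain ⟨ε, hε, hεL⟩ : ∃ ε : ℝ, (ε = 1 ∨ ε = -1) ∧ L w = ε * B := by
    rcases abs_cases (L w) with ⟨h1, _⟩ | ⟨h1, _⟩
    · exact ⟨1, Or.inl rfl, by rw [one_mul, ← hwB, h1]⟩
    · refine ⟨-1, Or.inr rfl, ?_⟩
      have : B = -L w := by rw [← hwB, h1]
      linarith
  have hε2 : ε * ε = 1 := by rcases hε with rfl | rfl <;> norm_num
  have hεabs : |ε| = 1 := by rcases hε with rfl | rfl <;> norm_num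
  -- bound on slot functionals
  have hslotbound : ∀ (i : Fin n) (v), |L (update w i v)| ≤ B * ‖v‖ := by
    intro i v
    rcases eq_or_ne v 0 with rfl | hv
    · rw [L.map_coord_zero i (update_self i 0 w)]
      simp
    · have hvn : ‖v‖ ≠ 0 := norm_ne_zero_iff.mpr hv
      have hunit : update w i (‖v‖⁻¹ • v) ∈ S := by
        intro k
        rcases eq_or_ne k i with rfl | hk
        · rw [update_self, norm_smul, norm_inv, norm_norm, inv_mul_cancel₀ hvn]
        · rw [update_of_ne hk]; exact hwS k
      have h1 : |L (update w i (‖v‖⁻¹ • v))| ≤ B := hmax hunit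
      have h2 : L (update w i v) = ‖v‖ * L (update w i (‖v‖⁻¹ • v)) := by
        conv_lhs => rw [show v = ‖v‖ • (‖v‖⁻¹ • v) by rw [smul_inv_smul₀ hvn]]
        rw [L.map_update_smul]
        simp
      rw [h2, abs_mul, abs_norm, mul_comm B ‖v‖]
      exact mul_le_mul_of_nonneg_left h1 (norm_nonneg v)
  -- slot identities
  have hslot : ∀ (i : Fin n) (v), L (update w i v) = ε * (B * (inner ℝ (w i) v : ℝ)) := by
    intro i v
    set ψ : EuclideanSpace ℂ M →ₗ[ℝ] ℝ :=
      ε • ((L.toContinuousLinearMap w i : EuclideanSpace ℂ M →L[ℝ] ℝ) :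
        EuclideanSpace ℂ M →ₗ[ℝ] ℝ) with hψdef
    have hψapp : ∀ v, ψ v = ε * L (update w i v) := by
      intro v
      simp [hψdef, ContinuousMultilinearMap.toContinuousLinearMap]
    have hψb : ∀ v, |ψ v| ≤ B * ‖v‖ := by
      intro v
      rw [hψapp, abs_mul, hεabs, one_mul]
      exact hslotbound i v
    have hψx : ψ (w i) = B := by
      rw [hψapp, update_eq_self, hεL, ← mul_assoc, hε2, one_mul]
    have hres := linear_eq_of_max ψ B (w i) (hwS i) hψb hψx v
    rw [hψapp] at hres
    have h2 : ε * (ε * L (update w i v)) = ε * (B * (inner ℝ (w i) v : ℝ)) := by rw [hres]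
    rwa [← mul_assoc, hε2, one_mul] at h2
  -- pair rigidity
  set i0 : Fin n := ⟨0, hn⟩ with hi0def
  have hpair : ∀ j, j ≠ i0 → w j = w i0 ∨ w j = -(w i0) := by
    intro j hji0
    by_contra hcon
    push_neg at hcon
    obtain ⟨hne1, hne2⟩ := hcon
    set a := w i0 with ha_def
    set b := w j with hb_def
    have ha : ‖a‖ = 1 := hwS i0
    have hb : ‖b‖ = 1 := hwS j
    set T : EuclideanSpace ℂ M → EuclideanSpace ℂ M → ℝ :=
      fun z1 z2 => L (update (update w i0 z1) j z2) with hTdef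
    have hTcomm : ∀ z1 z2, update (update w i0 z1) j z2 = update (update w j z2) i0 z1 :=
      fun z1 z2 => update_comm hji0.symm z1 z2 w
    have hTadd2 : ∀ z1 z2 z3, T z1 (z2 + z3) = T z1 z2 + T z1 z3 := by
      intro z1 z2 z3
      exact L.map_update_add (update w i0 z1) j z2 z3
    have hTsub2 : ∀ z1 z2 z3, T z1 (z2 - z3) = T z1 z2 - T z1 z3 := by
      intro z1 z2 z3
      exact L.map_update_sub (update w i0 z1) j z2 z3
    have hTadd1 : ∀ z1 z2 z3, T (z1 + z2) z3 = T z1 z3 + T z2 z3 := by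
      intro z1 z2 z3
      simp only [hTdef, hTcomm]
      exact L.map_update_add (update w j z3) i0 z1 z2
    have hTsub1 : ∀ z1 z2 z3, T (z1 - z2) z3 = T z1 z3 - T z2 z3 := by
      intro z1 z2 z3
      simp only [hTdef, hTcomm]
      exact L.map_update_sub (update w j z3) i0 z1 z2
    have hTsmul2 : ∀ (r : ℝ) z1 z2, T z1 (r • z2) = r * T z1 z2 := by
      intro r z1 z2
      have h := L.map_update_smul (update w i0 z1) j r z2
      rw [smul_eq_mul] at h
      exact h
    have hTsmul1 : ∀ (r : ℝ) z1 z2, T (r • z1) z2 = r * T z1 z2 := by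
      intro r z1 z2
      simp only [hTdef, hTcomm]
      have h := L.map_update_smul (update w j z2) i0 r z1
      rw [smul_eq_mul] at h
      exact h
    -- basic values
    have hTav : ∀ v, T a v = ε * (B * (inner ℝ b v : ℝ)) := by
      intro v
      simp only [hTdef, ha_def, update_eq_self]
      exact hslot j v
    have hTvb : ∀ v, T v b = ε * (B * (inner ℝ a v : ℝ)) := by
      intro v
      simp only [hTdef, hTcomm, hb_def, update_eq_self]
      exact hslot i0 v
    have hTswap : ∀ z1 z2, T z1 z2 = T z2 z1 := by
      intro z1 z2
      simp only [hTdef]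
      rw [← hsym (Equiv.swap i0 j) (update (update w i0 z2) j z1)]
      exact (congrArg L (update_update_swap w (Ne.symm hji0) z2 z1)).symm
    set p := a + b with hp_def
    set m := a - b with hm_def
    have hp0 : p ≠ 0 := by
      intro h
      exact hne2 (by rw [hb_def, ha_def] at *; rwa [add_eq_zero_iff_eq_neg'] at h)
    have hm0 : m ≠ 0 := by
      intro h
      rw [hm_def, sub_eq_zero] at h
      exact hne1 h.symm
    set c : ℝ := (inner ℝ a b : ℝ) with hc_def
    have hpn : ‖p‖ ^ 2 = 2 + 2 * c := by
      rw [hp_def, norm_add_sq_real, ha, hb]; ring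
    have hmn : ‖m‖ ^ 2 = 2 - 2 * c := by
      rw [hm_def, norm_sub_sq_real, ha, hb]; ring
    have hppos : 0 < ‖p‖ := norm_pos_iff.mpr hp0
    have hmpos : 0 < ‖m‖ := norm_pos_iff.mpr hm0
    have hplt : ‖p‖ < 2 := by nlinarith
    have hbb : (inner ℝ b b : ℝ) = 1 := by
      rw [real_inner_self_eq_norm_sq, hb]; norm_num
    have hba : (inner ℝ b a : ℝ) = c := by rw [real_inner_comm]
    have hTaa : T a a = ε * (B * c) := by rw [hTav a, hba]
    have hTab : T a b = ε * B := by rw [hTav b, hbb, mul_one]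
    have hTba : T b a = ε * B := by rw [hTswap, hTab]
    have hTbb : T b b = ε * (B * c) := hTvb b
    have hTpp : T p p = ε * B * ‖p‖ ^ 2 := by
      rw [hp_def, hTadd1, hTadd2, hTadd2, hTaa, hTab, hTba, hTbb, hpn]; ring
    have hTmm : T m (-m) = ε * B * ‖m‖ ^ 2 := by
      have h1 : T m m = ε * B * (2 * c - 2) := by
        rw [hm_def, hTsub1, hTsub2, hTsub2, hTaa, hTab, hTba, hTbb]; ring
      have h2 : T m (-m) = -T m m := by
        have h := hTsmul2 (-1) m m
        rw [neg_one_smul] at h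
        rw [h]; ring
      rw [h2, h1, hmn]; ring
    -- candidate tuples
    set z1 : EuclideanSpace ℂ M := ‖p‖⁻¹ • p with hz1_def
    have hz1 : ‖z1‖ = 1 := by
      rw [hz1_def, norm_smul, norm_inv, norm_norm, inv_mul_cancel₀ hppos.ne']
    set z2 : EuclideanSpace ℂ M := ‖m‖⁻¹ • m with hz2_def
    have hz2 : ‖z2‖ = 1 := by
      rw [hz2_def, norm_smul, norm_inv, norm_norm, inv_mul_cancel₀ hmpos.ne']
    set W1 := update (update w i0 z1) j z1 with hW1_def
    set W2 := update (update w i0 z2) j (-z2) with hW2_def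
    have hLW1 : L W1 = ε * B := by
      have h : L W1 = ‖p‖⁻¹ * (‖p‖⁻¹ * T p p) := by
        rw [hW1_def, hz1_def]
        rw [show (update (update w i0 (‖p‖⁻¹ • p)) j (‖p‖⁻¹ • p)) =
          update (update w i0 (‖p‖⁻¹ • p)) j (‖p‖⁻¹ • p) from rfl]
        have e1 := hTsmul1 ‖p‖⁻¹ p (‖p‖⁻¹ • p)
        have e2 := hTsmul2 ‖p‖⁻¹ p p
        calc L (update (update w i0 (‖p‖⁻¹ • p)) j (‖p‖⁻¹ • p))
            = T (‖p‖⁻¹ • p) (‖p‖⁻¹ • p) := rfl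
          _ = ‖p‖⁻¹ * T p (‖p‖⁻¹ • p) := hTsmul1 _ _ _
          _ = ‖p‖⁻¹ * (‖p‖⁻¹ * T p p) := by rw [hTsmul2]
      have key : ∀ X : ℝ, ‖p‖⁻¹ * (‖p‖⁻¹ * (X * ‖p‖ ^ 2)) =
          (‖p‖⁻¹ * ‖p‖) * ((‖p‖⁻¹ * ‖p‖) * X) := by intro X; ring
      rw [h, hTpp, key, inv_mul_cancel₀ hppos.ne', one_mul, one_mul]
    have hLW2 : L W2 = ε * B := by
      have h : L W2 = ‖m‖⁻¹ * (‖m‖⁻¹ * T m (-m)) := by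
        have hneg : -z2 = ‖m‖⁻¹ • (-m) := by rw [hz2_def, smul_neg]
        calc L W2 = T z2 (-z2) := rfl
          _ = T (‖m‖⁻¹ • m) (‖m‖⁻¹ • (-m)) := by rw [← hz2_def, ← hneg]
          _ = ‖m‖⁻¹ * T m (‖m‖⁻¹ • (-m)) := hTsmul1 _ _ _
          _ = ‖m‖⁻¹ * (‖m‖⁻¹ * T m (-m)) := by rw [hTsmul2]
      have key : ∀ X : ℝ, ‖m‖⁻¹ * (‖m‖⁻¹ * (X * ‖m‖ ^ 2)) =
          (‖m‖⁻¹ * ‖m‖) * ((‖m‖⁻¹ * ‖m‖) * X) := by intro X; ring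
      rw [h, hTmm, key, inv_mul_cancel₀ hmpos.ne', one_mul, one_mul]
    have habsεB : |ε * B| = B := by rw [abs_mul, hεabs, one_mul, abs_of_nonneg hB0]
    have hW1K : W1 ∈ K := by
      refine ⟨?_, ?_⟩
      · intro k
        rcases eq_or_ne k j with rfl | hkj
        · rw [hW1_def, update_self]; exact hz1
        · rcases eq_or_ne k i0 with rfl | hki0
          · rw [hW1_def, update_of_ne hkj, update_self]; exact hz1
          · rw [hW1_def, update_of_ne hkj, update_of_ne hki0]; exact hwS k
      · show |L W1| = B
        rw [hLW1, habsεB]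
    have hW2K : W2 ∈ K := by
      refine ⟨?_, ?_⟩
      · intro k
        rcases eq_or_ne k j with rfl | hkj
        · rw [hW2_def, update_self, norm_neg]; exact hz2
        · rcases eq_or_ne k i0 with rfl | hki0
          · rw [hW2_def, update_of_ne hkj, update_self]; exact hz2
          · rw [hW2_def, update_of_ne hkj, update_of_ne hki0]; exact hwS k
      · show |L W2| = B
        rw [hLW2, habsεB]
    -- sums
    set S0 : EuclideanSpace ℂ M := (∑ k, w k) - p with hS0_def
    have hsum1 : ∑ k, W1 k = S0 + (2 : ℝ) • z1 := by
      rw [hW1_def, sum_update_eq, sum_update_eq, update_of_ne hji0]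
      rw [hS0_def, hp_def, two_smul]
      abel
    have hsum2 : ∑ k, W2 k = S0 := by
      rw [hW2_def, sum_update_eq, sum_update_eq, update_of_ne hji0]
      rw [hS0_def, hp_def]
      abel
    have hsumw : ∑ k, w k = S0 + ‖p‖ • z1 := by
      have h : ‖p‖ • z1 = p := by
        rw [hz1_def, smul_smul, mul_inv_cancel₀ hppos.ne', one_smul]
      rw [h, hS0_def]
      abel
    set d : ℝ := (inner ℝ S0 z1 : ℝ) with hd_def
    have hgexp : ∀ t : ℝ, ‖S0 + t • z1‖ ^ 2 = ‖S0‖ ^ 2 + 2 * t * d + t ^ 2 := by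
      intro t
      rw [norm_add_sq_real, real_inner_smul_right, norm_smul, hz1, mul_one,
        Real.norm_eq_abs, sq_abs]
      ring
    have hI1 : ‖S0‖ ^ 2 + 2 * 2 * d + 2 ^ 2 ≤ ‖S0‖ ^ 2 + 2 * ‖p‖ * d + ‖p‖ ^ 2 := by
      have h := hwmax hW1K
      simp only [Set.mem_setOf_eq, hsum1, hsumw, hgexp] at h
      exact h
    have hI2 : ‖S0‖ ^ 2 ≤ ‖S0‖ ^ 2 + 2 * ‖p‖ * d + ‖p‖ ^ 2 := by
      have h := hwmax hW2K
      simp only [Set.mem_setOf_eq, hsum2, hsumw, hgexp] at h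
      have h0 : ‖S0‖ ^ 2 = ‖S0 + (0:ℝ) • z1‖ ^ 2 := by
        rw [zero_smul, add_zero]
      rw [h0, hgexp]
      linarith [h]
    exact parabola_contradiction (d := d) (P := ‖p‖) hppos hplt (by linarith) (by linarith)
  -- conclusion
  have hsgn : ∀ j, ∃ s : ℝ, (s = 1 ∨ s = -1) ∧ w j = s • w i0 := by
    intro j
    rcases eq_or_ne j i0 with rfl | hj
    · exact ⟨1, Or.inl rfl, (one_smul ℝ _).symm⟩
    · rcases hpair j hj with h | h
      · exact ⟨1, Or.inl rfl, by rw [one_smul]; exact h⟩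
      · exact ⟨-1, Or.inr rfl, by rw [neg_smul, one_smul]; exact h⟩
  choose s hs1 hs2 using hsgn
  have hweq : w = fun k => s k • w i0 := funext hs2
  have hLw : L w = (∏ k, s k) • L (fun _ => w i0) := by
    conv_lhs => rw [hweq]
    exact L.map_smul_univ s (fun _ => w i0)
  have habs : |∏ k, s k| = 1 := by
    rw [Finset.abs_prod]
    have h : ∀ k ∈ Finset.univ, |s k| = 1 := by
      intro k _
      rcases hs1 k with h | h <;> rw [h] <;> norm_num
    rw [Finset.prod_congr rfl h, Finset.prod_const_one]
  calc B = |L w| := hwB.symm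
  _ = |∏ k, s k| * |L (fun _ => w i0)| := by rw [hLw, smul_eq_mul, abs_mul]
  _ = |L (fun _ => w i0)| := by rw [habs, one_mul]
  _ ≤ C := hC (w i0) (le_of_eq (hwS i0))


lemma banach {n : ℕ} (hn : 0 < n)
    (L : ContinuousMultilinearMap ℝ (fun _ : Fin n => EuclideanSpace ℂ M) ℝ)
    (hsym : ∀ (σ : Equiv.Perm (Fin n)) (v : Fin n → EuclideanSpace ℂ M), L (v ∘ σ) = L v)
    (C : ℝ) (hC : ∀ u : EuclideanSpace ℂ M, ‖u‖ ≤ 1 → |L (fun _ => u)| ≤ C)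
    (x : Fin n → EuclideanSpace ℂ M) : |L x| ≤ C * ∏ i, ‖x i‖ := by
  classical
  by_cases hzero : ∃ i, x i = 0
  · obtain ⟨i, hi⟩ := hzero
    rw [L.map_coord_zero i hi]
    have h : ∏ k, ‖x k‖ = 0 := Finset.prod_eq_zero (Finset.mem_univ i) (by rw [hi, norm_zero])
    rw [h, mul_zero, abs_zero]
  · push_neg at hzero
    set y : Fin n → EuclideanSpace ℂ M := fun i => ‖x i‖⁻¹ • x i with hy
    have hyu : ∀ i, ‖y i‖ = 1 := by
      intro i
      rw [hy, norm_smul, norm_inv, norm_norm,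
        inv_mul_cancel₀ (norm_ne_zero_iff.mpr (hzero i))]
    have hxy : x = fun i => ‖x i‖ • y i := by
      funext i
      rw [hy, smul_smul, mul_inv_cancel₀ (norm_ne_zero_iff.mpr (hzero i)), one_smul]
    have hLxy : L x = (∏ i, ‖x i‖) • L y := by
      conv_lhs => rw [hxy]
      exact L.map_smul_univ _ y
    rw [hLxy, smul_eq_mul, abs_mul, abs_of_nonneg (Finset.prod_nonneg fun i _ => norm_nonneg _),
      mul_comm C _]
    exact mul_le_mul_of_nonneg_left (banach_unit hn L hsym C hC y hyu)
      (Finset.prod_nonneg fun i _ => norm_nonneg _)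

lemma grad_diff_bound (q : ℕ) (hq : 2 ≤ q)
    (L : ContinuousMultilinearMap ℝ (fun _ : Fin (2 * q) => EuclideanSpace ℂ M) ℝ)
    (hsym : ∀ (σ : Equiv.Perm (Fin (2 * q))) (v : Fin (2 * q) → EuclideanSpace ℂ M),
      L (v ∘ σ) = L v)
    (C : ℝ) (hC : ∀ u : EuclideanSpace ℂ M, ‖u‖ ≤ 1 → |L (fun _ => u)| ≤ C) (hC0 : 0 ≤ C)
    (gradχ : EuclideanSpace ℂ M → EuclideanSpace ℂ M)
    (hkey : ∀ u v : EuclideanSpace ℂ M,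
      (inner ℝ (gradχ u) v : ℝ) = (2 * q : ℝ) * L (update (fun _ => u) ⟨0, by omega⟩ v))
    (R : ℝ) (hR : 0 ≤ R) (x y : EuclideanSpace ℂ M) (hx : ‖x‖ ≤ R) (hy : ‖y‖ ≤ R) :
    ‖gradχ x - gradχ y‖ ≤ 4 * q ^ 2 * C * R ^ (2 * q - 2) * ‖x - y‖ := by
  classical
  have hn : 0 < 2 * q := by omega
  set i0 : Fin (2 * q) := ⟨0, by omega⟩ with hi0
  have hpt : ∀ v : EuclideanSpace ℂ M,
      |(inner ℝ (gradχ x - gradχ y) v : ℝ)| ≤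
        4 * q ^ 2 * C * R ^ (2 * q - 2) * ‖x - y‖ * ‖v‖ := by
    intro v
    set A : ℕ → (Fin (2 * q) → EuclideanSpace ℂ M) :=
      fun j => fun k => if k = i0 then v else if (k : ℕ) ≤ j then y else x with hA
    have hA0 : A 0 = update (fun _ => x) i0 v := by
      funext k
      rcases eq_or_ne k i0 with rfl | hk
      · simp [hA]
      · have hk0 : ¬((k : ℕ) ≤ 0) := by
          intro h
          exact hk (Fin.ext (by simpa using h))
        simp [hA, hk, hk0, update_of_ne hk]
    have hAlast : A (2 * q - 1) = update (fun _ => y) i0 v := by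
      funext k
      rcases eq_or_ne k i0 with rfl | hk
      · simp [hA]
      · have hk0 : (k : ℕ) ≤ 2 * q - 1 := by
          have := k.isLt; omega
        simp [hA, hk, hk0, update_of_ne hk]
    have hstep : ∀ j, ∀ _hj : j < 2 * q - 1,
        L (A j) - L (A (j + 1)) = L (update (A (j + 1)) ⟨j + 1, by omega⟩ (x - y)) := by
      intro j hj
      set kj : Fin (2 * q) := ⟨j + 1, by omega⟩ with hkj
      have hkji0 : kj ≠ i0 := by
        intro h
        have h2 := congrArg Fin.val h
        simp [hkj, hi0] at h2
      have h1 : A j = update (A (j + 1)) kj x := by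
        funext k
        rcases eq_or_ne k kj with rfl | hk
        · rw [update_self]
          simp only [hA]
          rw [if_neg hkji0, if_neg (by simp only [hkj, Fin.val_mk]; omega : ¬((kj : ℕ) ≤ j))]
        · rw [update_of_ne hk]
          simp only [hA]
          rcases eq_or_ne k i0 with rfl | hk0
          · rw [if_pos rfl, if_pos rfl]
          · rw [if_neg hk0, if_neg hk0]
            have hkv : (k : ℕ) ≠ j + 1 := by
              intro h
              exact hk (Fin.ext (by simp [hkj, h]))
            by_cases hle : (k : ℕ) ≤ j
            · rw [if_pos hle, if_pos (by omega)]
            · rw [if_neg hle, if_neg (by omega)]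
      have h2 : A (j + 1) = update (A (j + 1)) kj y := by
        have hval : A (j + 1) kj = y := by
          simp only [hA]
          rw [if_neg hkji0, if_pos (by simp only [hkj, Fin.val_mk]; omega : (kj : ℕ) ≤ j + 1)]
        conv_lhs => rw [← update_eq_self kj (A (j + 1)), hval]
      have e1 : L (A j) = L (update (A (j + 1)) kj x) := congrArg (fun z => L z) h1
      have e2 : L (A (j + 1)) = L (update (A (j + 1)) kj y) := by
        conv_lhs => rw [h2]
      rw [e1, e2, ← L.map_update_sub]
    have htel : L (A 0) - L (A (2 * q - 1)) =
        ∑ j ∈ Finset.range (2 * q - 1), (L (A j) - L (A (j + 1))) :=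
      (Finset.sum_range_sub' (fun j => L (A j)) (2 * q - 1)).symm
    have hterm : ∀ j ∈ Finset.range (2 * q - 1),
        |L (A j) - L (A (j + 1))| ≤ C * (‖v‖ * (‖x - y‖ * R ^ (2 * q - 2))) := by
      intro j hj
      rw [Finset.mem_range] at hj
      rw [hstep j hj]
      set kj : Fin (2 * q) := ⟨j + 1, by omega⟩ with hkj
      have hkji0 : kj ≠ i0 := by
        intro h
        have h2 := congrArg Fin.val h
        simp [hkj, hi0] at h2
      set mvec := update (A (j + 1)) kj (x - y) with hmv
      refine (banach hn L hsym C hC mvec).trans ?_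
      have hv : mvec i0 = v := by
        rw [hmv, update_of_ne (Ne.symm hkji0)]
        simp [hA]
      have hkjv : mvec kj = x - y := by rw [hmv, update_self]
      have hkj_mem : kj ∈ Finset.univ.erase i0 :=
        Finset.mem_erase.mpr ⟨hkji0, Finset.mem_univ _⟩
      have hsplit1 : ∏ k, ‖mvec k‖ = ‖mvec i0‖ * ∏ k ∈ Finset.univ.erase i0, ‖mvec k‖ :=
        (Finset.mul_prod_erase Finset.univ _ (Finset.mem_univ i0)).symm
      have hsplit2 : ∏ k ∈ Finset.univ.erase i0, ‖mvec k‖ =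
          ‖mvec kj‖ * ∏ k ∈ (Finset.univ.erase i0).erase kj, ‖mvec k‖ :=
        (Finset.mul_prod_erase _ _ hkj_mem).symm
      have hrest : ∏ k ∈ (Finset.univ.erase i0).erase kj, ‖mvec k‖ ≤ R ^ (2 * q - 2) := by
        have hcard : ((Finset.univ.erase i0).erase kj).card = 2 * q - 2 := by
          rw [Finset.card_erase_of_mem hkj_mem, Finset.card_erase_of_mem (Finset.mem_univ i0),
            Finset.card_univ, Fintype.card_fin]
          omega
        have hbd : ∀ k ∈ (Finset.univ.erase i0).erase kj, ‖mvec k‖ ≤ R := by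
          intro k hk
          obtain ⟨hknej, hk2⟩ := Finset.mem_erase.mp hk
          obtain ⟨hknei0, _⟩ := Finset.mem_erase.mp hk2
          rw [hmv, update_of_ne hknej]
          simp only [hA]
          rw [if_neg hknei0]
          split_ifs
          exacts [hy, hx]
        calc ∏ k ∈ (Finset.univ.erase i0).erase kj, ‖mvec k‖
            ≤ ∏ _k ∈ (Finset.univ.erase i0).erase kj, R :=
              Finset.prod_le_prod (fun _ _ => norm_nonneg _) hbd
          _ = R ^ (2 * q - 2) := by rw [Finset.prod_const, hcard]
      have hprod : ∏ k, ‖mvec k‖ ≤ ‖v‖ * (‖x - y‖ * R ^ (2 * q - 2)) := by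
        rw [hsplit1, hsplit2, hv, hkjv]
        refine mul_le_mul_of_nonneg_left ?_ (norm_nonneg v)
        exact mul_le_mul_of_nonneg_left hrest (norm_nonneg _)
      exact mul_le_mul_of_nonneg_left hprod hC0
    have hsum : |L (A 0) - L (A (2 * q - 1))| ≤
        ((2 * q - 1 : ℕ) : ℝ) * (C * (‖v‖ * (‖x - y‖ * R ^ (2 * q - 2)))) := by
      rw [htel]
      refine (Finset.abs_sum_le_sum_abs _ _).trans ?_
      refine (Finset.sum_le_sum hterm).trans ?_
      rw [Finset.sum_const, Finset.card_range, nsmul_eq_mul]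
    have hdiff : (inner ℝ (gradχ x - gradχ y) v : ℝ) =
        (2 * q : ℝ) * (L (A 0) - L (A (2 * q - 1))) := by
      rw [inner_sub_left, hkey x v, hkey y v, hA0, hAlast]
      ring
    rw [hdiff, abs_mul, abs_of_nonneg (by positivity : (0:ℝ) ≤ (2 * q : ℝ))]
    have hcast : ((2 * q - 1 : ℕ) : ℝ) = 2 * (q : ℝ) - 1 := by
      have : (1 : ℕ) ≤ 2 * q := by omega
      push_cast [Nat.cast_sub this]
      ring
    calc (2 * q : ℝ) * |L (A 0) - L (A (2 * q - 1))|
        ≤ (2 * q : ℝ) * (((2 * q - 1 : ℕ) : ℝ) * (C * (‖v‖ * (‖x - y‖ * R ^ (2 * q - 2))))) :=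
          mul_le_mul_of_nonneg_left hsum (by positivity)
      _ = ((2 * (q:ℝ)) * (2 * (q:ℝ) - 1)) * (C * (‖v‖ * (‖x - y‖ * R ^ (2 * q - 2)))) := by
          rw [hcast]; ring
      _ ≤ (4 * (q:ℝ) ^ 2) * (C * (‖v‖ * (‖x - y‖ * R ^ (2 * q - 2)))) := by
          have hfac : (2 * (q:ℝ)) * (2 * (q:ℝ) - 1) ≤ 4 * (q:ℝ) ^ 2 := by nlinarith [Nat.cast_nonneg (α := ℝ) q]
          exact mul_le_mul_of_nonneg_right hfac (by positivity)
      _ = 4 * (q:ℝ) ^ 2 * C * R ^ (2 * q - 2) * ‖x - y‖ * ‖v‖ := by ring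
  rcases eq_or_ne (gradχ x - gradχ y) 0 with hd | hd
  · rw [hd, norm_zero]
    positivity
  · have h := hpt (gradχ x - gradχ y)
    rw [real_inner_self_eq_norm_sq, abs_of_nonneg (by positivity)] at h
    have hdn : 0 < ‖gradχ x - gradχ y‖ := norm_pos_iff.mpr hd
    rw [pow_two] at h
    exact le_of_mul_le_mul_right h hdn

end Stmt4Aux

open Stmt4Aux in
/-- Control of the differential of the Hamiltonian flow:
`‖dΦ_χ^t(u)(v)‖ ≤ exp(4 q² t ‖χ‖_∞ ‖u‖^(2q-2)) ‖v‖` for `t ≥ 0`. -/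
theorem stmt_4 {M : Type*} [Fintype M] (q : ℕ) (hq : 2 ≤ q)
    (χ : EuclideanSpace ℂ M → ℝ)
    (L : ContinuousMultilinearMap ℝ (fun _ : Fin (2 * q) => EuclideanSpace ℂ M) ℝ)
    (hsym : ∀ (σ : Equiv.Perm (Fin (2 * q))) (v : Fin (2 * q) → EuclideanSpace ℂ M),
      L (v ∘ σ) = L v)
    (hχ : ∀ u, χ u = L (fun _ => u))
    (gradχ : EuclideanSpace ℂ M → EuclideanSpace ℂ M)
    (hgrad : ∀ u v : EuclideanSpace ℂ M, fderiv ℝ χ u v = (inner ℂ (gradχ u) v : ℂ).re)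
    (hcomm : ∀ u : EuclideanSpace ℂ M, ((inner ℂ (Complex.I • gradχ u) u : ℂ)).re = 0)
    (C : ℝ) (hC : ∀ u : EuclideanSpace ℂ M, ‖u‖ ≤ 1 → |χ u| ≤ C)
    (Φ : ℝ → EuclideanSpace ℂ M → EuclideanSpace ℂ M)
    (hΦ0 : ∀ u, Φ 0 u = u)
    (hΦ : ∀ (t : ℝ) (u : EuclideanSpace ℂ M),
      HasDerivAt (fun s => Φ s u) ((-Complex.I) • gradχ (Φ t u)) t) :
    ∀ (t : ℝ), 0 ≤ t → ∀ (u v : EuclideanSpace ℂ M),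
      ‖fderiv ℝ (fun w => Φ t w) u v‖
        ≤ Real.exp (4 * q ^ 2 * t * C * ‖u‖ ^ (2 * q - 2)) * ‖v‖ := by
  classical
  have hn : 0 < 2 * q := by omega
  have hCL : ∀ u : EuclideanSpace ℂ M, ‖u‖ ≤ 1 → |L (fun _ => u)| ≤ C := by
    intro u hu; rw [← hχ]; exact hC u hu
  have hC0 : 0 ≤ C := by
    have h := hCL 0 (by simp)
    have h0 : L (fun _ => (0 : EuclideanSpace ℂ M)) = 0 :=
      L.map_coord_zero ⟨0, hn⟩ rfl
    rw [h0] at h; simpa using h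
  -- key formula for the gradient
  have hkey : ∀ u v : EuclideanSpace ℂ M,
      (inner ℝ (gradχ u) v : ℝ) = (2 * q : ℝ) * L (update (fun _ => u) ⟨0, by omega⟩ v) := by
    intro u v
    set i0 : Fin (2 * q) := ⟨0, by omega⟩ with hi0
    have hχeq : χ = fun x : EuclideanSpace ℂ M => L (fun _ => x) := funext hχ
    have hd : HasFDerivAt χ
        (∑ i : Fin (2 * q), (L.toContinuousLinearMap (fun _ => u) i) ∘L
          (ContinuousLinearMap.id ℝ (EuclideanSpace ℂ M))) u := by
      rw [hχeq]
      exact HasFDerivAt.multilinear_comp L (fun _ => hasFDerivAt_id u)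
    have h1 : fderiv ℝ χ u v = ∑ i : Fin (2 * q), L (update (fun _ => u) i v) := by
      rw [hd.fderiv]
      simp [ContinuousMultilinearMap.toContinuousLinearMap]
    have h2 : ∀ i : Fin (2 * q), L (update (fun _ => u) i v) = L (update (fun _ => u) i0 v) := by
      intro i
      rcases eq_or_ne i i0 with rfl | hii0
      · rfl
      · rw [← hsym (Equiv.swap i0 i) (update (fun _ => u) i0 v)]
        congr 1
        funext k
        rcases eq_or_ne k i with rfl | hk1
        · rw [update_self, comp_apply, Equiv.swap_apply_right, update_self]
        · rw [update_of_ne hk1, comp_apply]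
          rcases eq_or_ne k i0 with rfl | hk2
          · rw [Equiv.swap_apply_left, update_of_ne hii0]
          · rw [Equiv.swap_apply_of_ne_of_ne hk2 hk1, update_of_ne hk2]
    have h3 : (inner ℝ (gradχ u) v : ℝ) = fderiv ℝ χ u v := by
      rw [rinner_eq, hgrad]
    rw [h3, h1, Finset.sum_congr rfl (fun i _ => h2 i), Finset.sum_const, Finset.card_univ,
      Fintype.card_fin, nsmul_eq_mul]
    push_cast
    ring
  -- norm conservation
  have hnorm : ∀ (t : ℝ) (u : EuclideanSpace ℂ M), ‖Φ t u‖ = ‖u‖ := by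
    intro t u
    have hD : ∀ s : ℝ, HasDerivAt (fun τ => (inner ℝ (Φ τ u) (Φ τ u) : ℝ)) 0 s := by
      intro s
      have h := HasDerivAt.inner ℝ (hΦ s u) (hΦ s u)
      have hzero : (inner ℝ ((-Complex.I) • gradχ (Φ s u)) (Φ s u) : ℝ) = 0 := by
        rw [rinner_eq]
        have h1 : (inner ℂ ((-Complex.I) • gradχ (Φ s u)) (Φ s u) : ℂ) =
            -(inner ℂ (Complex.I • gradχ (Φ s u)) (Φ s u) : ℂ) := by
          rw [show ((-Complex.I) • gradχ (Φ s u)) = -(Complex.I • gradχ (Φ s u)) from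
            neg_smul Complex.I _, inner_neg_left]
        rw [h1, Complex.neg_re, hcomm (Φ s u), neg_zero]
      have hzero2 : (inner ℝ (Φ s u) ((-Complex.I) • gradχ (Φ s u)) : ℝ) = 0 := by
        rw [real_inner_comm]; exact hzero
      rw [hzero, hzero2, add_zero] at h
      exact h
    have hconst := is_const_of_deriv_eq_zero (f := fun τ => (inner ℝ (Φ τ u) (Φ τ u) : ℝ))
      (fun s => (hD s).differentiableAt) (fun s => (hD s).deriv) t 0
    rw [real_inner_self_eq_norm_sq, real_inner_self_eq_norm_sq, hΦ0 u] at hconst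
    rw [← Real.sqrt_sq (norm_nonneg (Φ t u)), ← Real.sqrt_sq (norm_nonneg u), hconst]
  -- contraction estimate
  have hcontr : ∀ (t : ℝ), 0 ≤ t → ∀ x y : EuclideanSpace ℂ M,
      ‖Φ t x - Φ t y‖ ≤ ‖x - y‖ *
        Real.exp (4 * q ^ 2 * C * (max ‖x‖ ‖y‖) ^ (2 * q - 2) * t) := by
    intro t ht x y
    set R : ℝ := max ‖x‖ ‖y‖ with hRdef
    have hR : 0 ≤ R := le_trans (norm_nonneg x) (le_max_left _ _)
    set Kr : ℝ := 4 * q ^ 2 * C * R ^ (2 * q - 2) with hKrdef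
    have hKr0 : 0 ≤ Kr := by positivity
    set K : ℝ≥0 := Real.toNNReal Kr with hKdef
    have hKc : (K : ℝ) = Kr := Real.coe_toNNReal _ hKr0
    have hlip : ∀ s : ℝ, LipschitzOnWith K (fun z => (-Complex.I) • gradχ z)
        (Metric.closedBall (0 : EuclideanSpace ℂ M) R) := by
      intro s
      apply LipschitzOnWith.of_dist_le_mul
      intro a ha b hb
      rw [Metric.mem_closedBall, dist_zero_right] at ha hb
      rw [dist_eq_norm, dist_eq_norm, ← smul_sub, norm_smul]
      have hI : ‖-Complex.I‖ = 1 := by simp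
      rw [hI, one_mul, hKc]
      exact grad_diff_bound q hq L hsym C hCL hC0 gradχ hkey R hR a b ha hb
    have hcont : ∀ z : EuclideanSpace ℂ M, ContinuousOn (fun s => Φ s z) (Icc 0 t) := by
      intro z
      have : Continuous fun s => Φ s z := by
        apply continuous_iff_continuousAt.mpr
        intro s
        exact (hΦ s z).continuousAt
      exact this.continuousOn
    have hder : ∀ z : EuclideanSpace ℂ M, ∀ s ∈ Ico 0 t,
        HasDerivWithinAt (fun τ => Φ τ z) ((-Complex.I) • gradχ (Φ s z)) (Ici s) s :=
      fun z s _ => (hΦ s z).hasDerivWithinAt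
    have hmemx : ∀ s ∈ Ico 0 t, Φ s x ∈ Metric.closedBall (0 : EuclideanSpace ℂ M) R := by
      intro s _
      rw [Metric.mem_closedBall, dist_zero_right, hnorm s x]
      exact le_max_left _ _
    have hmemy : ∀ s ∈ Ico 0 t, Φ s y ∈ Metric.closedBall (0 : EuclideanSpace ℂ M) R := by
      intro s _
      rw [Metric.mem_closedBall, dist_zero_right, hnorm s y]
      exact le_max_right _ _
    have hinit : dist (Φ 0 x) (Φ 0 y) ≤ dist x y := by
      rw [hΦ0 x, hΦ0 y]
    have hres := dist_le_of_trajectories_ODE_of_mem (v := fun _ z => (-Complex.I) • gradχ z)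
      (s := fun _ : ℝ => Metric.closedBall (0 : EuclideanSpace ℂ M) R)
      (fun s _ => hlip s) (hcont x) (hder x) hmemx (hcont y) (hder y) hmemy hinit t
      ⟨ht, le_rfl⟩
    rw [dist_eq_norm, dist_eq_norm, sub_zero, hKc] at hres
    exact hres
  -- final limit argument
  intro t ht u v
  by_cases hdiff : DifferentiableAt ℝ (fun w => Φ t w) u
  · set A := fderiv ℝ (fun w => Φ t w) u with hAdef
    have hFd : HasFDerivAt (fun w => Φ t w) A u := hdiff.hasFDerivAt
    have hline : HasDerivAt (fun s : ℝ => Φ t (u + s • v)) (A v) 0 := by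
      have hcurve : HasDerivAt (fun s : ℝ => u + s • v) v 0 := by
        simpa using ((hasDerivAt_id (0 : ℝ)).smul_const v).const_add u
      have hFd' : HasFDerivAt (fun w => Φ t w) A (u + (0:ℝ) • v) := by
        rw [zero_smul, add_zero]; exact hFd
      exact hFd'.comp_hasDerivAt 0 hcurve
    have hslope : Tendsto (fun s : ℝ => ‖s⁻¹ • (Φ t (u + s • v) - Φ t u)‖) (𝓝[>] 0)
        (𝓝 ‖A v‖) := by
      have h := hasDerivAt_iff_tendsto_slope.mp hline
      have h2 : Tendsto (fun s : ℝ => s⁻¹ • (Φ t (u + s • v) - Φ t u)) (𝓝[≠] 0) (𝓝 (A v)) := by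
        have hval : u + (0 : ℝ) • v = u := by simp
        simpa [slope_fun_def, sub_zero, hval] using h
      have h3 : 𝓝[>] (0:ℝ) ≤ 𝓝[≠] (0:ℝ) :=
        nhdsWithin_mono _ (fun s hs => ne_of_gt hs)
      exact (continuous_norm.continuousAt.tendsto.comp (h2.mono_left h3))
    have hbnd : ∀ s ∈ Ioi (0:ℝ), ‖s⁻¹ • (Φ t (u + s • v) - Φ t u)‖ ≤
        Real.exp (4 * q ^ 2 * C * (max ‖u + s • v‖ ‖u‖) ^ (2 * q - 2) * t) * ‖v‖ := by
      intro s hs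
      have hs0 : (0:ℝ) < s := hs
      rw [norm_smul, norm_inv, Real.norm_eq_abs, abs_of_pos hs0]
      have h := hcontr t ht (u + s • v) u
      have hsub : u + s • v - u = s • v := add_sub_cancel_left u (s • v)
      rw [hsub, norm_smul, Real.norm_eq_abs, abs_of_pos hs0] at h
      calc s⁻¹ * ‖Φ t (u + s • v) - Φ t u‖
          ≤ s⁻¹ * (s * ‖v‖ *
            Real.exp (4 * q ^ 2 * C * (max ‖u + s • v‖ ‖u‖) ^ (2 * q - 2) * t)) :=
            mul_le_mul_of_nonneg_left h (by positivity)
        _ = Real.exp (4 * q ^ 2 * C * (max ‖u + s • v‖ ‖u‖) ^ (2 * q - 2) * t) * ‖v‖ := by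
            field_simp
    have hrhs : Tendsto (fun s : ℝ =>
        Real.exp (4 * q ^ 2 * C * (max ‖u + s • v‖ ‖u‖) ^ (2 * q - 2) * t) * ‖v‖)
        (𝓝[>] 0)
        (𝓝 (Real.exp (4 * q ^ 2 * C * ‖u‖ ^ (2 * q - 2) * t) * ‖v‖)) := by
      have hc : Continuous fun s : ℝ =>
          Real.exp (4 * q ^ 2 * C * (max ‖u + s • v‖ ‖u‖) ^ (2 * q - 2) * t) * ‖v‖ := by
        fun_prop
      have h1 := hc.tendsto 0
      simp only [zero_smul, add_zero, max_self] at h1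
      exact h1.mono_left nhdsWithin_le_nhds
    have hfinal : ‖A v‖ ≤ Real.exp (4 * q ^ 2 * C * ‖u‖ ^ (2 * q - 2) * t) * ‖v‖ := by
      refine le_of_tendsto_of_tendsto hslope hrhs ?_
      filter_upwards [self_mem_nhdsWithin] with s hs
      exact hbnd s hs
    rw [show (4:ℝ) * q ^ 2 * t * C * ‖u‖ ^ (2 * q - 2) =
      4 * q ^ 2 * C * ‖u‖ ^ (2 * q - 2) * t from by ring]
    exact hfinal
  · rw [fderiv_zero_of_not_differentiableAt hdiff]
    simp only [ContinuousLinearMap.zero_apply, norm_zero]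
    positivity
end

section
/- Let $\mathcal{M}$ be a finite set, $\omega^{(i)} \in \mathbb{Z}^{\mathcal{M}}\setminus\{0\}$, $q \geq 1$, and $P$ a homogeneous polynomial of degree $2q$ on $\mathbb{C}^{\mathcal{M}}$ commuting with the Euclidean norm. Define $\|P\|_{\mathscr{H}} = \sup_{a\in\mathbb{Z}}\|\lfloor\Pi_{\omega^{(i)},a}P\rceil\|_\infty$ and $\|P\|_{\mathscr{C}} = \sup_{a\in\mathbb{Z}}\langle a\rangle\|\lfloor\Pi_{\omega^{(i)},a}P\rceil\|_\infty$. Then $\|P\|_{\mathscr{H}} \leq \|\lfloor P\rceil\|_\infty \leq 5q|\omega^{(i)}|_\infty\|P\|_{\mathscr{H}}$ and $\|\lfloor P\rceil\|_\infty \leq 5\log(2q|\omega^{(i)}|_\infty)\|P\|_{\mathscr{C}}$, where $|\omega^{(i)}|_\infty = \max_{j\in\mathcal{M}}|\omega^{(i)}_j|$. -/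
open scoped BigOperators

/-- The monomial `u_{k₁}⋯u_{k_q} conj(u_{ℓ₁})⋯conj(u_{ℓ_q})`. -/
def mono {M : Type*} [Fintype M] (q : ℕ) (k l : Fin q → M) (u : M → ℂ) : ℂ :=
  (∏ i, u (k i)) * ∏ i, (starRingEnd ℂ) (u (l i))

/-- Evaluation of the modulus polynomial `⌊P⌉`. -/
noncomputable def pabs {M : Type*} [Fintype M] (q : ℕ)
    (P : (Fin q → M) → (Fin q → M) → ℂ) (u : M → ℂ) : ℂ :=
  ∑ k : Fin q → M, ∑ l : Fin q → M, ((‖P k l‖ : ℝ) : ℂ) * mono q k l u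

/-- Symmetry of the coefficients. -/
def IsSymmCoef {M : Type*} [Fintype M] (q : ℕ)
    (P : (Fin q → M) → (Fin q → M) → ℂ) : Prop :=
  ∀ (φ σ : Equiv.Perm (Fin q)) (k l : Fin q → M), P (k ∘ φ) (l ∘ σ) = P k l

/-- The spectral projector `Π_{ω,a}` at the level of coefficients,
for integer frequencies. -/
def projZ {M : Type*} [Fintype M] (q : ℕ) (ω : M → ℤ) (a : ℤ)
    (P : (Fin q → M) → (Fin q → M) → ℂ) : (Fin q → M) → (Fin q → M) → ℂ :=
  fun k l => if (∑ i, ω (k i)) - (∑ i, ω (l i)) = a then P k l else 0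

/-- Supremum of `|f|` over the Euclidean unit ball of `ℂ^𝓜`. -/
noncomputable def supNorm {M : Type*} [Fintype M] (f : (M → ℂ) → ℂ) : ℝ :=
  ⨆ u : {u : M → ℂ // (∑ j, ‖u j‖ ^ 2) ≤ 1}, ‖f u.1‖

/-- The norm `‖P‖_{ℋ(ω)} = sup_a ‖⌊Π_{ω,a}P⌉‖_∞`. -/
noncomputable def HNorm {M : Type*} [Fintype M] (q : ℕ) (ω : M → ℤ)
    (P : (Fin q → M) → (Fin q → M) → ℂ) : ℝ :=
  ⨆ a : ℤ, supNorm (pabs q (projZ q ω a P))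

/-- The norm `‖P‖_{𝒞(ω)} = sup_a ⟨a⟩ ‖⌊Π_{ω,a}P⌉‖_∞`. -/
noncomputable def CNorm {M : Type*} [Fintype M] (q : ℕ) (ω : M → ℤ)
    (P : (Fin q → M) → (Fin q → M) → ℂ) : ℝ :=
  ⨆ a : ℤ, Real.sqrt (1 + (a : ℝ) ^ 2) * supNorm (pabs q (projZ q ω a P))



lemma step_lem (n : ℕ) (hn : 1 ≤ n) :
    (Real.sqrt (1 + (n:ℝ)^2))⁻¹ ≤ Real.arsinh n - Real.arsinh ((n:ℝ) - 1) := by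
  have h1 : ((n:ℝ) - 1) < n := by linarith
  obtain ⟨c, hc, hceq⟩ := exists_hasDerivAt_eq_slope Real.arsinh
    (fun x => (Real.sqrt (1 + x^2))⁻¹) h1
    Real.continuous_arsinh.continuousOn
    (fun x _ => Real.hasDerivAt_arsinh x)
  have hden : (n:ℝ) - ((n:ℝ) - 1) = 1 := by ring
  rw [hden, div_one] at hceq
  rw [← hceq]
  have hn1 : (1:ℝ) ≤ n := by exact_mod_cast hn
  have hc0 : 0 ≤ c := by
    have := hc.1; simp only [Set.mem_Ioo] at hc; linarith [hc.1]
  have hcn : c ≤ n := by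
    simp only [Set.mem_Ioo] at hc; linarith [hc.2]
  have hs : Real.sqrt (1 + c^2) ≤ Real.sqrt (1 + (n:ℝ)^2) := by
    apply Real.sqrt_le_sqrt; nlinarith
  have hpos : 0 < Real.sqrt (1 + c^2) := Real.sqrt_pos.2 (by nlinarith)
  exact inv_anti₀ hpos hs

lemma sum_nat_le (N : ℕ) (hN : 2 ≤ N) :
    ∑ a ∈ Finset.Icc 1 N, (Real.sqrt (1 + (a:ℝ)^2))⁻¹
      ≤ ((Real.sqrt 2)⁻¹ + (Real.sqrt 5)⁻¹ - Real.arsinh 2) + Real.arsinh N := by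
  induction N with
  | zero => omega
  | succ n ih =>
    rcases Nat.lt_or_ge n 2 with h | h
    · have hn1 : n = 1 := by omega
      subst hn1
      have he : Finset.Icc 1 2 = ({1, 2} : Finset ℕ) := by decide
      rw [he, Finset.sum_insert (by decide), Finset.sum_singleton]
      norm_num
    · have hih := ih h
      rw [Finset.sum_Icc_succ_top (by omega)]
      have hstep := step_lem (n+1) (by omega)
      have hcast : ((n+1:ℕ):ℝ) - 1 = (n:ℝ) := by push_cast; ring
      rw [hcast] at hstep
      push_cast at hstep hih ⊢
      linarith

lemma int_split (f : ℤ → ℝ) (hf : ∀ a, f (-a) = f a) (N : ℕ) :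
    ∑ a ∈ Finset.Icc (-(N:ℤ)) (N:ℤ), f a = f 0 + 2 * ∑ a ∈ Finset.Icc 1 N, f (a:ℤ) := by
  induction N with
  | zero => simp
  | succ n ih =>
    have h1 : Finset.Icc (-((n:ℤ)+1)) ((n:ℤ)+1)
        = insert (-((n:ℤ)+1)) (insert ((n:ℤ)+1) (Finset.Icc (-(n:ℤ)) (n:ℤ))) := by
      ext x; simp only [Finset.mem_Icc, Finset.mem_insert]; omega
    have e1 : ((n+1:ℕ):ℤ) = (n:ℤ)+1 := by push_cast; ring
    rw [e1, h1, Finset.sum_insert (by simp only [Finset.mem_insert, Finset.mem_Icc]; omega),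
      Finset.sum_insert (by simp only [Finset.mem_Icc]; omega), ih,
      Finset.sum_Icc_succ_top (by omega), hf ((n:ℤ)+1)]
    push_cast
    ring

lemma sum_weight_le (N : ℕ) (hN : 2 ≤ N) :
    ∑ a ∈ Finset.Icc (-(N:ℤ)) (N:ℤ), (Real.sqrt (1 + (a:ℝ)^2))⁻¹ ≤ 5 * Real.log N := by
  have hsplit := int_split (fun a => (Real.sqrt (1 + (a:ℝ)^2))⁻¹)
    (by intro a; norm_num) N
  rw [hsplit]
  have hcast : ∀ a : ℕ, (Real.sqrt (1 + (((a:ℤ)):ℝ)^2))⁻¹ = (Real.sqrt (1 + ((a:ℕ):ℝ)^2))⁻¹ := by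
    intro a; norm_num
  simp only [hcast]
  have hzero : (Real.sqrt (1 + ((0:ℤ):ℝ)^2))⁻¹ = 1 := by norm_num
  rw [hzero]
  have hsum := sum_nat_le N hN
  -- numeric facts
  have h2 : (1.414:ℝ) ≤ Real.sqrt 2 := by
    nlinarith [Real.sq_sqrt (show (0:ℝ) ≤ 2 by norm_num), Real.sqrt_nonneg 2]
  have h5 : (2.236:ℝ) ≤ Real.sqrt 5 := by
    nlinarith [Real.sq_sqrt (show (0:ℝ) ≤ 5 by norm_num), Real.sqrt_nonneg 5]
  have hi2 : (Real.sqrt 2)⁻¹ ≤ 0.7073 :=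
    le_trans (inv_anti₀ (by norm_num) h2) (by norm_num)
  have hi5 : (Real.sqrt 5)⁻¹ ≤ 0.448 :=
    le_trans (inv_anti₀ (by norm_num) h5) (by norm_num)
  have hlog2 := Real.log_two_gt_d9
  rcases eq_or_lt_of_le hN with hN2 | hN3
  · -- N = 2
    have he : Finset.Icc 1 N = ({1, 2} : Finset ℕ) := by rw [← hN2]; decide
    rw [he, Finset.sum_insert (by decide), Finset.sum_singleton, ← hN2]
    norm_num
    linarith
  · -- N ≥ 3
    have hN3' : (3:ℕ) ≤ N := hN3
    have hN3r : (3:ℝ) ≤ N := by exact_mod_cast hN3'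
    have hNpos : (0:ℝ) < N := by linarith
    have harsinh2 : 2 * Real.log 2 ≤ Real.arsinh 2 := by
      have e : Real.arsinh 2 = Real.log (2 + Real.sqrt (1 + 2^2)) := rfl
      have h4 : Real.log 4 ≤ Real.log (2 + Real.sqrt (1 + 2^2)) := by
        apply Real.log_le_log (by norm_num)
        have : Real.sqrt (1 + 2^2) = Real.sqrt 5 := by norm_num
        rw [this]; linarith
      have h4' : Real.log 4 = 2 * Real.log 2 := by
        rw [show (4:ℝ) = 2^(2:ℕ) by norm_num, Real.log_pow]; push_cast; ring
      rw [e]; linarith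
    have harsinhN : Real.arsinh N ≤ Real.log (5/2) + Real.log N := by
      have e : Real.arsinh (N:ℝ) = Real.log ((N:ℝ) + Real.sqrt (1 + (N:ℝ)^2)) := rfl
      have hsq : Real.sqrt (1 + (N:ℝ)^2) ≤ 1.5 * N := by
        have h1 : Real.sqrt (1 + (N:ℝ)^2) ≤ Real.sqrt ((1.5*N)^2) :=
          Real.sqrt_le_sqrt (by nlinarith)
        rwa [Real.sqrt_sq (by positivity)] at h1
      have h2' : Real.log ((N:ℝ) + Real.sqrt (1 + (N:ℝ)^2)) ≤ Real.log (5/2 * N) := by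
        apply Real.log_le_log (by positivity)
        linarith
      rw [e, Real.log_mul (by norm_num) (ne_of_gt hNpos)] at *
      linarith
    have hlog3N : Real.log 3 ≤ Real.log N := Real.log_le_log (by norm_num) (by exact_mod_cast hN3')
    have hlog9 : 3 * Real.log 2 ≤ 2 * Real.log 3 := by
      have h := Real.log_le_log (show (0:ℝ) < 8 by norm_num) (show (8:ℝ) ≤ 9 by norm_num)
      rw [show (8:ℝ) = 2^(3:ℕ) by norm_num, show (9:ℝ) = 3^(2:ℕ) by norm_num,
        Real.log_pow, Real.log_pow] at h
      push_cast at h; linarith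
    have hlog5 : 3 * Real.log 5 ≤ 7 * Real.log 2 := by
      have h := Real.log_le_log (show (0:ℝ) < 125 by norm_num) (show (125:ℝ) ≤ 128 by norm_num)
      rw [show (125:ℝ) = 5^(3:ℕ) by norm_num, show (128:ℝ) = 2^(7:ℕ) by norm_num,
        Real.log_pow, Real.log_pow] at h
      push_cast at h; linarith
    have hlog52 : Real.log ((5:ℝ)/2) = Real.log 5 - Real.log 2 :=
      Real.log_div (by norm_num) (by norm_num)
    linarith


noncomputable def realpabs {M : Type*} [Fintype M] (q : ℕ)
    (P : (Fin q → M) → (Fin q → M) → ℂ) (u : M → ℂ) : ℝ :=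
  ∑ k : Fin q → M, ∑ l : Fin q → M,
    ‖P k l‖ * ((∏ i, ‖u (k i)‖) * ∏ i, ‖u (l i)‖)

noncomputable def Csum {M : Type*} [Fintype M] (q : ℕ)
    (P : (Fin q → M) → (Fin q → M) → ℂ) : ℝ :=
  ∑ k : Fin q → M, ∑ l : Fin q → M, ‖P k l‖

/-- the vector of absolute values -/
noncomputable def absu {M : Type*} [Fintype M] (u : M → ℂ) : M → ℂ := fun j => ((‖u j‖ : ℝ) : ℂ)

instance ballNonempty {M : Type*} [Fintype M] :
    Nonempty {u : M → ℂ // (∑ j, ‖u j‖ ^ 2) ≤ 1} :=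
  ⟨⟨0, by simp⟩⟩

lemma realpabs_nonneg {M : Type*} [Fintype M] (q : ℕ)
    (P : (Fin q → M) → (Fin q → M) → ℂ) (u : M → ℂ) : 0 ≤ realpabs q P u := by
  unfold realpabs; positivity

lemma abs_pabs_le {M : Type*} [Fintype M] (q : ℕ)
    (P : (Fin q → M) → (Fin q → M) → ℂ) (u : M → ℂ) :
    ‖pabs q P u‖ ≤ realpabs q P u := by
  refine le_trans (norm_sum_le _ _) ?_
  refine le_trans (Finset.sum_le_sum fun k _ => norm_sum_le _ _) (le_of_eq ?_)
  unfold realpabs mono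
  refine Finset.sum_congr rfl fun k _ => Finset.sum_congr rfl fun l _ => ?_
  rw [norm_mul, norm_mul, Complex.norm_real, norm_norm, norm_prod, norm_prod]
  simp

lemma pabs_absu {M : Type*} [Fintype M] (q : ℕ)
    (P : (Fin q → M) → (Fin q → M) → ℂ) (u : M → ℂ) :
    pabs q P (absu u) = ((realpabs q P u : ℝ) : ℂ) := by
  unfold pabs realpabs mono absu
  push_cast
  refine Finset.sum_congr rfl fun k _ => Finset.sum_congr rfl fun l _ => ?_
  simp [Complex.conj_ofReal]

lemma absu_mem {M : Type*} [Fintype M] (u : M → ℂ)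
    (hu : (∑ j, ‖u j‖ ^ 2) ≤ 1) :
    (∑ j, ‖(absu u) j‖ ^ 2) ≤ 1 := by
  have : ∀ j, ‖(absu u) j‖ = ‖u j‖ := by
    intro j; simp [absu, Complex.norm_real]
  simpa [this] using hu

lemma realpabs_mono {M : Type*} [Fintype M] (q : ℕ)
    (Q R : (Fin q → M) → (Fin q → M) → ℂ)
    (h : ∀ k l, ‖Q k l‖ ≤ ‖R k l‖) (u : M → ℂ) :
    realpabs q Q u ≤ realpabs q R u := by
  refine Finset.sum_le_sum fun k _ => Finset.sum_le_sum fun l _ => ?_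
  exact mul_le_mul_of_nonneg_right (h k l) (by positivity)

lemma abs_projZ_le {M : Type*} [Fintype M] (q : ℕ) (ω : M → ℤ) (a : ℤ)
    (P : (Fin q → M) → (Fin q → M) → ℂ) (k l : Fin q → M) :
    ‖projZ q ω a P k l‖ ≤ ‖P k l‖ := by
  unfold projZ
  split_ifs
  · exact le_rfl
  · simp [norm_nonneg]

lemma realpabs_ball {M : Type*} [Fintype M] (q : ℕ)
    (P : (Fin q → M) → (Fin q → M) → ℂ) (u : M → ℂ)
    (hu : (∑ j, ‖u j‖ ^ 2) ≤ 1) :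
    realpabs q P u ≤ Csum q P := by
  have hj : ∀ j, ‖u j‖ ≤ 1 := by
    intro j
    have h1 : ‖u j‖ ^ 2 ≤ 1 :=
      le_trans (Finset.single_le_sum (fun j _ => sq_nonneg (‖u j‖))
        (Finset.mem_univ j)) hu
    nlinarith [norm_nonneg (u j)]
  unfold realpabs Csum
  refine Finset.sum_le_sum fun k _ => Finset.sum_le_sum fun l _ => ?_
  have hp1 : (∏ i, ‖u (k i)‖) ≤ 1 :=
    Finset.prod_le_one (fun i _ => norm_nonneg _) (fun i _ => hj _)
  have hp2 : (∏ i, ‖u (l i)‖) ≤ 1 :=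
    Finset.prod_le_one (fun i _ => norm_nonneg _) (fun i _ => hj _)
  have hp1' : 0 ≤ (∏ i, ‖u (k i)‖) := by positivity
  have hp2' : 0 ≤ (∏ i, ‖u (l i)‖) := by positivity
  have h12 : (∏ i, ‖u (k i)‖) * (∏ i, ‖u (l i)‖) ≤ 1 := by
    nlinarith
  exact mul_le_of_le_one_right (norm_nonneg _) h12

lemma realpabs_decomp {M : Type*} [Fintype M] (q : ℕ) (ω : M → ℤ) (N : ℤ)
    (P : (Fin q → M) → (Fin q → M) → ℂ)
    (hN : ∀ (k l : Fin q → M), |(∑ i, ω (k i)) - ∑ i, ω (l i)| ≤ N) (u : M → ℂ) :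
    ∑ a ∈ Finset.Icc (-N) N, realpabs q (projZ q ω a P) u = realpabs q P u := by
  unfold realpabs
  rw [Finset.sum_comm]
  refine Finset.sum_congr rfl fun k _ => ?_
  rw [Finset.sum_comm]
  refine Finset.sum_congr rfl fun l _ => ?_
  rw [Finset.sum_eq_single_of_mem ((∑ i, ω (k i)) - ∑ i, ω (l i))
    (by have h := abs_le.mp (hN k l); simp only [Finset.mem_Icc]; exact ⟨h.1, h.2⟩)]
  · rw [show projZ q ω ((∑ i, ω (k i)) - ∑ i, ω (l i)) P k l = P k l from if_pos rfl]
  · intro b _ hb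
    rw [show projZ q ω b P k l = 0 from if_neg (fun h => hb h.symm)]
    simp

-- supNorm lemmas
lemma supNorm_le {M : Type*} [Fintype M] (f : (M → ℂ) → ℂ) (c : ℝ)
    (hc : ∀ u : {u : M → ℂ // (∑ j, ‖u j‖ ^ 2) ≤ 1}, ‖f u.1‖ ≤ c) :
    supNorm f ≤ c :=
  ciSup_le hc

lemma le_supNorm {M : Type*} [Fintype M] (f : (M → ℂ) → ℂ) (c : ℝ)
    (hc : ∀ u : {u : M → ℂ // (∑ j, ‖u j‖ ^ 2) ≤ 1}, ‖f u.1‖ ≤ c)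
    (u : {u : M → ℂ // (∑ j, ‖u j‖ ^ 2) ≤ 1}) :
    ‖f u.1‖ ≤ supNorm f :=
  le_ciSup (⟨c, by rintro x ⟨v, rfl⟩; exact hc v⟩ : BddAbove _) u

lemma supNorm_nonneg {M : Type*} [Fintype M] (f : (M → ℂ) → ℂ) : 0 ≤ supNorm f :=
  Real.iSup_nonneg fun u => norm_nonneg _

/-- comparison of the spectral norms with the classical sup norm:
`‖P‖_ℋ ≤ ‖⌊P⌉‖_∞ ≤ 5q|ω|_∞ ‖P‖_ℋ` and `‖⌊P⌉‖_∞ ≤ 5 log(2q|ω|_∞) ‖P‖_𝒞`. -/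
theorem stmt_9 {M : Type*} [Fintype M] (ωi : M → ℤ) (hω : ωi ≠ 0)
    (q : ℕ) (hq : 1 ≤ q)
    (P : (Fin q → M) → (Fin q → M) → ℂ) (hsym : IsSymmCoef q P) :
    HNorm q ωi P ≤ supNorm (pabs q P) ∧
    supNorm (pabs q P)
      ≤ 5 * (q : ℝ) * ((Finset.univ.sup fun j => (ωi j).natAbs : ℕ) : ℝ) * HNorm q ωi P ∧
    supNorm (pabs q P)
      ≤ 5 * Real.log (2 * (q : ℝ) * ((Finset.univ.sup fun j => (ωi j).natAbs : ℕ) : ℝ)) *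
          CNorm q ωi P := by
  classical
  set Ωn : ℕ := Finset.univ.sup fun j => (ωi j).natAbs with hΩdef
  have hΩ1 : 1 ≤ Ωn := by
    obtain ⟨j, hj⟩ := Function.ne_iff.mp hω
    have hj' : ωi j ≠ 0 := by simpa using hj
    have h1 : 1 ≤ (ωi j).natAbs := by omega
    exact le_trans h1 (Finset.le_sup (f := fun j => (ωi j).natAbs) (Finset.mem_univ j))
  have hqΩ : 1 ≤ q * Ωn := by
    calc 1 = 1 * 1 := by norm_num
    _ ≤ q * Ωn := Nat.mul_le_mul hq hΩ1
  set N : ℕ := 2 * q * Ωn with hNdef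
  have hN2 : 2 ≤ N := by
    calc 2 = 2 * 1 := by norm_num
    _ ≤ 2 * (q * Ωn) := Nat.mul_le_mul_left 2 hqΩ
    _ = N := by rw [hNdef, mul_assoc]
  have hbound : ∀ (k l : Fin q → M), |(∑ i, ωi (k i)) - ∑ i, ωi (l i)| ≤ (N:ℤ) := by
    have h1 : ∀ k : Fin q → M, |∑ i, ωi (k i)| ≤ (q:ℤ) * (Ωn:ℤ) := by
      intro k
      calc |∑ i, ωi (k i)| ≤ ∑ i, |ωi (k i)| := Finset.abs_sum_le_sum_abs _ _
      _ ≤ ∑ _i : Fin q, (Ωn:ℤ) := Finset.sum_le_sum fun i _ => by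
            rw [Int.abs_eq_natAbs]
            exact_mod_cast Finset.le_sup (f := fun j => (ωi j).natAbs) (Finset.mem_univ (k i))
      _ = (q:ℤ) * (Ωn:ℤ) := by simp [mul_comm]
    intro k l
    have hk := h1 k; have hl := h1 l
    have hN' : (N:ℤ) = 2 * ((q:ℤ) * (Ωn:ℤ)) := by rw [hNdef]; push_cast; ring
    rw [hN']
    calc |(∑ i, ωi (k i)) - ∑ i, ωi (l i)|
        = |(∑ i, ωi (k i)) + -(∑ i, ωi (l i))| := by rw [sub_eq_add_neg]
    _ ≤ |∑ i, ωi (k i)| + |-(∑ i, ωi (l i))| := abs_add_le _ _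
    _ = |∑ i, ωi (k i)| + |∑ i, ωi (l i)| := by rw [abs_neg]
    _ ≤ 2 * ((q:ℤ) * (Ωn:ℤ)) := by linarith
  -- basic bounds
  have habsA : ∀ (a : ℤ) (u : {u : M → ℂ // (∑ j, ‖u j‖ ^ 2) ≤ 1}),
      ‖pabs q (projZ q ωi a P) u.1‖ ≤ Csum q P := fun a u =>
    le_trans (abs_pabs_le q _ u.1)
      (le_trans (realpabs_mono q _ P (abs_projZ_le q ωi a P) u.1) (realpabs_ball q P u.1 u.2))
  have hsupA_le : ∀ a : ℤ, supNorm (pabs q (projZ q ωi a P)) ≤ Csum q P := fun a =>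
    supNorm_le _ _ (habsA a)
  have hsup_nonneg : ∀ a : ℤ, 0 ≤ supNorm (pabs q (projZ q ωi a P)) := fun a =>
    supNorm_nonneg _
  have hHbdd : BddAbove (Set.range fun a : ℤ => supNorm (pabs q (projZ q ωi a P))) :=
    ⟨Csum q P, by rintro x ⟨a, rfl⟩; exact hsupA_le a⟩
  have hH_nonneg : 0 ≤ HNorm q ωi P := Real.iSup_nonneg hsup_nonneg
  have hC_nonneg : 0 ≤ CNorm q ωi P :=
    Real.iSup_nonneg fun a => mul_nonneg (Real.sqrt_nonneg _) (hsup_nonneg a)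
  have key : ∀ (a : ℤ) (u : {u : M → ℂ // (∑ j, ‖u j‖ ^ 2) ≤ 1}),
      realpabs q (projZ q ωi a P) u.1 ≤ supNorm (pabs q (projZ q ωi a P)) := by
    intro a u
    have h := le_supNorm (pabs q (projZ q ωi a P)) (Csum q P) (habsA a)
      ⟨absu u.1, absu_mem u.1 u.2⟩
    rwa [pabs_absu, Complex.norm_real, Real.norm_eq_abs, abs_of_nonneg (realpabs_nonneg q _ u.1)] at h
  have habsP : ∀ (u : {u : M → ℂ // (∑ j, ‖u j‖ ^ 2) ≤ 1}),
      ‖pabs q P u.1‖ ≤ Csum q P := fun u =>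
    le_trans (abs_pabs_le q P u.1) (realpabs_ball q P u.1 u.2)
  have keyP : ∀ (u : {u : M → ℂ // (∑ j, ‖u j‖ ^ 2) ≤ 1}),
      realpabs q P u.1 ≤ supNorm (pabs q P) := by
    intro u
    have h := le_supNorm (pabs q P) (Csum q P) habsP ⟨absu u.1, absu_mem u.1 u.2⟩
    rwa [pabs_absu, Complex.norm_real, Real.norm_eq_abs, abs_of_nonneg (realpabs_nonneg q P u.1)] at h
  refine ⟨?_, ?_, ?_⟩
  · -- Part 1
    refine ciSup_le fun a => supNorm_le _ _ fun u => ?_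
    calc ‖pabs q (projZ q ωi a P) u.1‖
        ≤ realpabs q (projZ q ωi a P) u.1 := abs_pabs_le q _ u.1
    _ ≤ realpabs q P u.1 := realpabs_mono q _ P (abs_projZ_le q ωi a P) u.1
    _ ≤ supNorm (pabs q P) := keyP u
  · -- Part 2
    refine supNorm_le _ _ fun u => ?_
    have hcard : ((Finset.Icc (-(N:ℤ)) (N:ℤ)).card : ℝ) = 2 * (N:ℝ) + 1 := by
      rw [Int.card_Icc]
      have : ((N:ℤ) + 1 - -(N:ℤ)).toNat = 2 * N + 1 := by omega
      rw [this]; push_cast; ring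
    calc ‖pabs q P u.1‖ ≤ realpabs q P u.1 := abs_pabs_le q P u.1
    _ = ∑ a ∈ Finset.Icc (-(N:ℤ)) (N:ℤ), realpabs q (projZ q ωi a P) u.1 :=
        (realpabs_decomp q ωi N P hbound u.1).symm
    _ ≤ ∑ _a ∈ Finset.Icc (-(N:ℤ)) (N:ℤ), HNorm q ωi P :=
        Finset.sum_le_sum fun a _ => le_trans (key a u) (le_ciSup hHbdd a)
    _ = ((Finset.Icc (-(N:ℤ)) (N:ℤ)).card : ℝ) * HNorm q ωi P := by
        rw [Finset.sum_const, nsmul_eq_mul]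
    _ ≤ 5 * (q:ℝ) * (Ωn:ℝ) * HNorm q ωi P := by
        refine mul_le_mul_of_nonneg_right ?_ hH_nonneg
        rw [hcard]
        have hNr : (N:ℝ) = 2 * (q:ℝ) * (Ωn:ℝ) := by rw [hNdef]; push_cast; ring
        have hqΩr : (1:ℝ) ≤ (q:ℝ) * (Ωn:ℝ) := by exact_mod_cast hqΩ
        rw [hNr]; nlinarith
  · -- Part 3
    refine supNorm_le _ _ fun u => ?_
    have hCbdd : BddAbove (Set.range fun a : ℤ =>
        Real.sqrt (1 + (a:ℝ)^2) * supNorm (pabs q (projZ q ωi a P))) := by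
      refine ⟨Real.sqrt (1 + (N:ℝ)^2) * Csum q P, ?_⟩
      rintro x ⟨a, rfl⟩
      dsimp only
      rcases le_or_gt |a| (N:ℤ) with h | h
      · have ha2 : (a:ℝ)^2 ≤ (N:ℝ)^2 := by
          have h1 : a^2 ≤ (N:ℤ)^2 := by nlinarith [abs_nonneg a, sq_abs a]
          exact_mod_cast h1
        exact mul_le_mul (Real.sqrt_le_sqrt (by linarith)) (hsupA_le a) (hsup_nonneg a)
          (Real.sqrt_nonneg _)
      · have hz : supNorm (pabs q (projZ q ωi a P)) = 0 := by
          refine le_antisymm (supNorm_le _ _ fun v => ?_) (supNorm_nonneg _)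
          have hzero : pabs q (projZ q ωi a P) v.1 = 0 := by
            unfold pabs
            refine Finset.sum_eq_zero fun k _ => Finset.sum_eq_zero fun l _ => ?_
            have : projZ q ωi a P k l = 0 := by
              refine if_neg fun hEq => ?_
              have hb := hbound k l
              rw [hEq] at hb
              omega
            rw [this]; simp
          rw [hzero]; simp
        rw [hz, mul_zero]
        exact mul_nonneg (Real.sqrt_nonneg _) (by unfold Csum; positivity)
    have hterm : ∀ a ∈ Finset.Icc (-(N:ℤ)) (N:ℤ),
        realpabs q (projZ q ωi a P) u.1 ≤ (Real.sqrt (1 + (a:ℝ)^2))⁻¹ * CNorm q ωi P := by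
      intro a _
      have hs : (0:ℝ) < Real.sqrt (1 + (a:ℝ)^2) := Real.sqrt_pos.2 (by positivity)
      have h2 : Real.sqrt (1 + (a:ℝ)^2) * supNorm (pabs q (projZ q ωi a P))
          ≤ CNorm q ωi P := le_ciSup hCbdd a
      calc realpabs q (projZ q ωi a P) u.1 ≤ supNorm (pabs q (projZ q ωi a P)) := key a u
      _ = (Real.sqrt (1 + (a:ℝ)^2))⁻¹ *
            (Real.sqrt (1 + (a:ℝ)^2) * supNorm (pabs q (projZ q ωi a P))) := by
          rw [← mul_assoc, inv_mul_cancel₀ (ne_of_gt hs), one_mul]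
      _ ≤ (Real.sqrt (1 + (a:ℝ)^2))⁻¹ * CNorm q ωi P :=
          mul_le_mul_of_nonneg_left h2 (by positivity)
    have hNr : ((N:ℕ):ℝ) = 2 * (q:ℝ) * (Ωn:ℝ) := by rw [hNdef]; push_cast; ring
    calc ‖pabs q P u.1‖ ≤ realpabs q P u.1 := abs_pabs_le q P u.1
    _ = ∑ a ∈ Finset.Icc (-(N:ℤ)) (N:ℤ), realpabs q (projZ q ωi a P) u.1 :=
        (realpabs_decomp q ωi N P hbound u.1).symm
    _ ≤ ∑ a ∈ Finset.Icc (-(N:ℤ)) (N:ℤ), (Real.sqrt (1 + (a:ℝ)^2))⁻¹ * CNorm q ωi P :=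
        Finset.sum_le_sum hterm
    _ = (∑ a ∈ Finset.Icc (-(N:ℤ)) (N:ℤ), (Real.sqrt (1 + (a:ℝ)^2))⁻¹) * CNorm q ωi P :=
        (Finset.sum_mul _ _ _).symm
    _ ≤ 5 * Real.log N * CNorm q ωi P :=
        mul_le_mul_of_nonneg_right (sum_weight_le N hN2) hC_nonneg
    _ = 5 * Real.log (2 * (q:ℝ) * (Ωn:ℝ)) * CNorm q ωi P := by rw [hNr]
end

section
/- Almost surely, the random frequencies $\omega_k = k^2 + X_k\langle k\rangle^{-s_*}$ ($k \in \mathbb{Z}$), where the $X_k$ are independent standard Gaussians and $s_* > 0$, satisfy: there exists $\gamma > 0$ such that for all $q \geq 1$, $\boldsymbol{m} \in (\mathbb{Z}\setminus\{0\})^q$, pairwise distinct $\boldsymbol{h}_1,\dots,\boldsymbol{h}_q \in \mathbb{Z}$, and all $a \in \mathbb{Z}$: $\big|a + \sum_{j=1}^q \boldsymbol{m}_j\omega_{\boldsymbol{h}_j}\big| \geq \gamma\,(\min_j\langle\boldsymbol{h}_j\rangle)^{-s_*}\prod_{j=1}^q|\boldsymbol{m}_j|^{-4}\langle\boldsymbol{h}_j\rangle^{-4}$.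 -/
open MeasureTheory ProbabilityTheory Real Set
open scoped NNReal ENNReal Classical

namespace Stmt15Aux
noncomputable section
variable {Ω : Type*} [MeasurableSpace Ω]
lemma sqrt_two_pi_ge : (2:ℝ) ≤ Real.sqrt (2 * π) := by
  nth_rewrite 1 [show (2:ℝ) = Real.sqrt 4 by
    rw [show (4:ℝ) = 2^2 by norm_num, Real.sqrt_sq (by norm_num)]]
  exact Real.sqrt_le_sqrt (by nlinarith [Real.pi_gt_three])

lemma gaussianPDFReal_eq (x : ℝ) :
    gaussianPDFReal 0 1 x = (Real.sqrt (2 * π))⁻¹ * rexp (-x^2/2) := by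
  unfold gaussianPDFReal
  norm_num

lemma gaussian_pdfReal_le (x : ℝ) : gaussianPDFReal 0 1 x ≤ 1/2 * rexp (-x^2/2) := by
  rw [gaussianPDFReal_eq]
  apply mul_le_mul_of_nonneg_right _ (Real.exp_nonneg _)
  rw [inv_le_comm₀ (by nlinarith [sqrt_two_pi_ge]) (by norm_num)]
  simpa using sqrt_two_pi_ge

lemma gaussian_pdfReal_le_half (x : ℝ) : gaussianPDFReal 0 1 x ≤ 1/2 := by
  calc gaussianPDFReal 0 1 x ≤ 1/2 * rexp (-x^2/2) := gaussian_pdfReal_le x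
    _ ≤ 1/2 * 1 := by
        apply mul_le_mul_of_nonneg_left _ (by norm_num)
        rw [Real.exp_le_one_iff]
        nlinarith [sq_nonneg x]
    _ = 1/2 := by norm_num

lemma gaussian_interval (c r : ℝ) :
    gaussianReal 0 1 {x | |x - c| ≤ r} ≤ ENNReal.ofReal r := by
  rcases le_or_gt 0 r with hr | hr
  · have hset : {x : ℝ | |x - c| ≤ r} = Icc (c - r) (c + r) := by
      ext x
      rw [Set.mem_setOf_eq, abs_sub_le_iff, Set.mem_Icc]
      constructor <;> intro h <;> constructor <;> linarith [h.1, h.2]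
    rw [hset, gaussianReal_apply 0 one_ne_zero]
    calc ∫⁻ x in Icc (c - r) (c + r), gaussianPDF 0 1 x
        ≤ ∫⁻ _x in Icc (c - r) (c + r), ENNReal.ofReal (1/2) := by
          apply lintegral_mono
          intro x
          exact ENNReal.ofReal_le_ofReal (gaussian_pdfReal_le_half x)
      _ = ENNReal.ofReal (1/2) * volume (Icc (c - r) (c + r)) := by
          rw [setLIntegral_const]
      _ ≤ ENNReal.ofReal r := by
          rw [Real.volume_Icc, ← ENNReal.ofReal_mul (by norm_num)]
          apply ENNReal.ofReal_le_ofReal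
          linarith
  · have hset : {x : ℝ | |x - c| ≤ r} = ∅ := by
      ext x
      simp only [Set.mem_setOf_eq, Set.mem_empty_iff_false, iff_false, not_le]
      exact lt_of_lt_of_le hr (abs_nonneg _)
    rw [hset]
    simp

lemma gaussian_tail {t : ℝ} (ht : 0 ≤ t) :
    gaussianReal 0 1 {x | t < |x|} ≤ ENNReal.ofReal (6 * rexp (-t)) := by
  have hIoi : gaussianReal 0 1 (Ioi t) ≤ ENNReal.ofReal (3 * rexp (-t)) := by
    rw [gaussianReal_apply 0 one_ne_zero]
    have hbd : ∀ x ∈ Ioi t, gaussianPDF 0 1 x ≤ ENNReal.ofReal (3 * rexp (-x)) := by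
      intro x hx
      have hx0 : 0 ≤ x := le_trans ht (le_of_lt hx)
      apply ENNReal.ofReal_le_ofReal
      have he : rexp 1 ≤ 6 := by linarith [Real.exp_one_lt_d9]
      have h2 : rexp (-x^2/2) ≤ rexp 1 * rexp (-x) := by
        rw [← Real.exp_add]
        apply Real.exp_le_exp.mpr
        nlinarith [sq_nonneg (x - 1)]
      calc gaussianPDFReal 0 1 x ≤ 1/2 * rexp (-x^2/2) := gaussian_pdfReal_le x
        _ ≤ 1/2 * (rexp 1 * rexp (-x)) := by
            apply mul_le_mul_of_nonneg_left h2 (by norm_num)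
        _ ≤ 3 * rexp (-x) := by nlinarith [Real.exp_nonneg (-x)]
    calc ∫⁻ x in Ioi t, gaussianPDF 0 1 x
        ≤ ∫⁻ x in Ioi t, ENNReal.ofReal (3 * rexp (-x)) :=
          setLIntegral_mono (by fun_prop) hbd
      _ = ENNReal.ofReal (∫ x in Ioi t, 3 * rexp (-x)) := by
          rw [ofReal_integral_eq_lintegral_ofReal]
          · apply Integrable.const_mul
            have := exp_neg_integrableOn_Ioi t (b := 1) one_pos
            exact (by simpa using this : IntegrableOn (fun x => rexp (-x)) (Ioi t))
          · filter_upwards with x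
            positivity
      _ = ENNReal.ofReal (3 * rexp (-t)) := by
          rw [MeasureTheory.integral_const_mul, integral_exp_neg_Ioi]
  have hsym : gaussianReal 0 1 (Iio (-t)) = gaussianReal 0 1 (Ioi t) := by
    have hmap := gaussianReal_map_const_mul (μ := 0) (v := 1) (-1)
    have hv : (NNReal.mk ((-1:ℝ)^2) (by positivity) * (1:ℝ≥0)) = (1:ℝ≥0) := by
      rw [mul_one]; ext; simp
    rw [hv, show ((-1:ℝ) * 0) = 0 by ring] at hmap
    conv_lhs => rw [← hmap]
    rw [Measure.map_apply (by fun_prop) measurableSet_Iio]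
    congr 1
    ext x
    simp only [Set.mem_preimage, Set.mem_Iio, Set.mem_Ioi]
    constructor <;> intro h <;> linarith
  have hsub : {x : ℝ | t < |x|} ⊆ Iio (-t) ∪ Ioi t := by
    intro x hx
    simp only [Set.mem_setOf_eq] at hx
    rcases lt_abs.mp hx with h | h
    · exact Or.inr h
    · exact Or.inl (by simp only [Set.mem_Iio]; linarith)
  calc gaussianReal 0 1 {x | t < |x|} ≤ gaussianReal 0 1 (Iio (-t) ∪ Ioi t) :=
        measure_mono hsub
    _ ≤ gaussianReal 0 1 (Iio (-t)) + gaussianReal 0 1 (Ioi t) := measure_union_le _ _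
    _ ≤ ENNReal.ofReal (3 * rexp (-t)) + ENNReal.ofReal (3 * rexp (-t)) := by
        rw [hsym]; exact add_le_add hIoi hIoi
    _ = ENNReal.ofReal (6 * rexp (-t)) := by
        rw [← ENNReal.ofReal_add (by positivity) (by positivity)]
        ring_nf

lemma anticoncentration {Ω : Type*} [MeasurableSpace Ω] (μ : Measure Ω)
    [IsProbabilityMeasure μ] {Z W : Ω → ℝ} (hZ : Measurable Z) (hW : Measurable W)
    (hind : IndepFun Z W μ) (hlaw : μ.map W = gaussianReal 0 1)
    {t : ℝ} (ht : t ≠ 0) (ε : ℝ) :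
    μ {ω | |Z ω + t * W ω| ≤ ε} ≤ ENNReal.ofReal (ε / |t|) := by
  have hs : MeasurableSet {p : ℝ × ℝ | |p.1 + t * p.2| ≤ ε} := by
    apply measurableSet_le (by fun_prop) (by fun_prop)
  have hmap : μ {ω | |Z ω + t * W ω| ≤ ε}
      = (μ.map (fun ω => (Z ω, W ω))) {p : ℝ × ℝ | |p.1 + t * p.2| ≤ ε} := by
    rw [Measure.map_apply (hZ.prodMk hW) hs]
    rfl
  rw [hmap, (indepFun_iff_map_prod_eq_prod_map_map hZ.aemeasurable hW.aemeasurable).mp hind,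
    hlaw, Measure.prod_apply hs]
  have hinner : ∀ z : ℝ, gaussianReal 0 1 (Prod.mk z ⁻¹' {p : ℝ × ℝ | |p.1 + t * p.2| ≤ ε})
      ≤ ENNReal.ofReal (ε / |t|) := by
    intro z
    have hset : Prod.mk z ⁻¹' {p : ℝ × ℝ | |p.1 + t * p.2| ≤ ε}
        = {x : ℝ | |x - (-z/t)| ≤ ε / |t|} := by
      ext x
      simp only [Set.mem_preimage, Set.mem_setOf_eq]
      have h1 : z + t * x = t * (x - (-z/t)) := by field_simp; ring
      rw [h1, abs_mul, ← le_div_iff₀' (abs_pos.mpr ht)]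
    rw [hset]
    exact gaussian_interval _ _
  calc ∫⁻ z, gaussianReal 0 1 (Prod.mk z ⁻¹' {p : ℝ × ℝ | |p.1 + t * p.2| ≤ ε}) ∂(μ.map Z)
      ≤ ∫⁻ _z, ENNReal.ofReal (ε / |t|) ∂(μ.map Z) := lintegral_mono hinner
    _ = ENNReal.ofReal (ε / |t|) := by
        rw [lintegral_const]
        have : IsProbabilityMeasure (μ.map Z) := Measure.isProbabilityMeasure_map hZ.aemeasurable
        simp

lemma prod_max_lower {W : ℕ} (hW : 0 < W) (S : Finset ℤ) :
    W ^ S.card ≤ W ^ (2 * W + 1) * ∏ x ∈ S, max 1 (x.natAbs ^ 2) := by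
  classical
  set T := S.filter (fun x => max 1 (x.natAbs ^ 2) < W) with hT
  have hTsub : T ⊆ Finset.Icc (-(W:ℤ)) W := by
    intro x hx
    rw [hT, Finset.mem_filter] at hx
    have h2 : x.natAbs ^ 2 < W := lt_of_le_of_lt (le_max_right _ _) hx.2
    have h3 : x.natAbs < W := lt_of_le_of_lt (Nat.le_self_pow two_ne_zero _) h2
    rw [Finset.mem_Icc]
    omega
  have hTcard : T.card ≤ 2 * W + 1 := by
    calc T.card ≤ (Finset.Icc (-(W:ℤ)) W).card := Finset.card_le_card hTsub
      _ = 2 * W + 1 := by rw [Int.card_Icc]; omega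
  have hST : S \ T ⊆ S := Finset.sdiff_subset
  have hcard : S.card - (2 * W + 1) ≤ (S \ T).card := by
    have hTS : T ⊆ S := by rw [hT]; exact Finset.filter_subset _ _
    have := Finset.card_sdiff_add_card_eq_card hTS
    omega
  have hstep1 : W ^ ((S \ T).card) ≤ ∏ x ∈ S \ T, max 1 (x.natAbs ^ 2) := by
    rw [← Finset.prod_const]
    apply Finset.prod_le_prod'
    intro x hx
    rw [Finset.mem_sdiff, hT, Finset.mem_filter] at hx
    push_neg at hx
    exact hx.2 hx.1
  have hstep2 : ∏ x ∈ S \ T, max 1 (x.natAbs ^ 2) ≤ ∏ x ∈ S, max 1 (x.natAbs ^ 2) :=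
    Finset.prod_le_prod_of_subset_of_one_le' hST (fun i _ _ => le_max_left _ _)
  calc W ^ S.card ≤ W ^ (2 * W + 1 + (S \ T).card) :=
        Nat.pow_le_pow_right hW (by omega)
    _ = W ^ (2 * W + 1) * W ^ ((S \ T).card) := pow_add _ _ _
    _ ≤ W ^ (2 * W + 1) * ∏ x ∈ S, max 1 (x.natAbs ^ 2) := by
        exact Nat.mul_le_mul_left _ (le_trans hstep1 hstep2)

lemma tsum_pi_prod : ∀ (q : ℕ) (g : Fin q → ℤ × ℤ → ℝ≥0∞),
    ∑' f : Fin q → ℤ × ℤ, ∏ j, g j (f j) = ∏ j, ∑' x : ℤ × ℤ, g j x := by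
  intro q
  induction q with
  | zero =>
      intro g
      rw [Finset.univ_eq_empty, Finset.prod_empty]
      rw [tsum_eq_single (fun i => Fin.elim0 i) ?_]
      · simp
      · intro f hf
        exact absurd (funext fun i => Fin.elim0 i) hf
  | succ n ih =>
      intro g
      rw [← Equiv.tsum_eq (Fin.consEquiv (fun _ => ℤ × ℤ))]
      have : ∀ p : (ℤ × ℤ) × (Fin n → ℤ × ℤ),
          ∏ j, g j ((Fin.consEquiv (fun _ => ℤ × ℤ)) p j)
          = g 0 p.1 * ∏ j : Fin n, g j.succ (p.2 j) := by
        intro p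
        rw [Fin.prod_univ_succ]
        simp [Fin.consEquiv]
      calc ∑' p : (ℤ × ℤ) × (Fin n → ℤ × ℤ), ∏ j, g j ((Fin.consEquiv (fun _ => ℤ × ℤ)) p j)
          = ∑' p : (ℤ × ℤ) × (Fin n → ℤ × ℤ), g 0 p.1 * ∏ j : Fin n, g j.succ (p.2 j) := by
            exact tsum_congr this
        _ = ∑' a : ℤ × ℤ, ∑' f : Fin n → ℤ × ℤ, g 0 a * ∏ j : Fin n, g j.succ (f j) :=
            ENNReal.tsum_prod (f := fun (a : ℤ × ℤ) (ff : Fin n → ℤ × ℤ) => g 0 a * ∏ j : Fin n, g j.succ (ff j))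
        _ = (∑' a : ℤ × ℤ, g 0 a) * ∑' f : Fin n → ℤ × ℤ, ∏ j : Fin n, g j.succ (f j) := by
            rw [← ENNReal.tsum_mul_right]
            exact tsum_congr fun a => ENNReal.tsum_mul_left
        _ = ∏ j, ∑' x : ℤ × ℤ, g j x := by
            rw [ih (fun j => g j.succ), Fin.prod_univ_succ]

lemma summable_wh : Summable (fun h : ℤ => ((1:ℝ) + (h:ℝ)^2)⁻¹) := by
  have hg : Summable (fun h : ℤ => |1 / (h:ℝ)^2|) :=
    (Real.summable_one_div_int_pow.mpr one_lt_two).abs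
  have hind : Summable (fun h : ℤ => if h = 0 then (1:ℝ) else 0) := by
    apply summable_of_ne_finset_zero (s := {0})
    intro b hb
    simp only [Finset.mem_singleton] at hb
    simp [hb]
  apply Summable.of_nonneg_of_le (fun h => by positivity)
    (fun h => ?_) (hg.add hind)
  by_cases h0 : h = 0
  · simp [h0]
  · have h1 : (1:ℝ) ≤ (h:ℝ)^2 := by
      have habs : (1:ℝ) ≤ |(h:ℝ)| := by
        rw [← Int.cast_abs]
        exact_mod_cast Int.one_le_abs (by exact_mod_cast h0)
      nlinarith [sq_abs ((h:ℝ))]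
    have h2 : ((1:ℝ) + (h:ℝ)^2)⁻¹ ≤ ((h:ℝ)^2)⁻¹ :=
      inv_anti₀ (by nlinarith) (by nlinarith)
    rw [if_neg h0, add_zero, abs_of_nonneg (by positivity : (0:ℝ) ≤ 1 / (h:ℝ)^2), one_div]
    exact h2

lemma summable_wm : Summable (fun m : ℤ => if m = 0 then (0:ℝ) else (|(m:ℝ)|^3)⁻¹) := by
  have hg : Summable (fun m : ℤ => |1 / (m:ℝ)^3|) :=
    (Real.summable_one_div_int_pow.mpr (by norm_num)).abs
  apply hg.congr
  intro m
  by_cases h0 : m = 0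
  · simp [h0]
  · rw [if_neg h0, abs_div, abs_one, ← abs_pow, one_div]

lemma tsum_ch_lt_top : (∑' k : ℤ, ENNReal.ofReal (((1:ℝ) + (k:ℝ)^2)⁻¹)) < ⊤ := by
  rw [← ENNReal.ofReal_tsum_of_nonneg (fun k => by positivity) summable_wh]
  exact ENNReal.ofReal_lt_top

lemma tsum_wgt_lt_top :
    (∑' p : ℤ × ℤ, ENNReal.ofReal
      ((if p.1 = 0 then (0:ℝ) else (|((p.1:ℤ):ℝ)|^3)⁻¹) * ((1:ℝ) + ((p.2:ℤ):ℝ)^2)⁻¹)) < ⊤ := by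
  have heq : ∀ p : ℤ × ℤ, ENNReal.ofReal
      ((if p.1 = 0 then (0:ℝ) else (|((p.1:ℤ):ℝ)|^3)⁻¹) * ((1:ℝ) + ((p.2:ℤ):ℝ)^2)⁻¹)
      = ENNReal.ofReal (if p.1 = 0 then (0:ℝ) else (|((p.1:ℤ):ℝ)|^3)⁻¹)
        * ENNReal.ofReal (((1:ℝ) + ((p.2:ℤ):ℝ)^2)⁻¹) := by
    intro p
    rw [ENNReal.ofReal_mul (by positivity)]
  calc (∑' p : ℤ × ℤ, ENNReal.ofReal
      ((if p.1 = 0 then (0:ℝ) else (|((p.1:ℤ):ℝ)|^3)⁻¹) * ((1:ℝ) + ((p.2:ℤ):ℝ)^2)⁻¹))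
      = ∑' (m : ℤ) (h : ℤ), ENNReal.ofReal (if m = 0 then (0:ℝ) else (|(m:ℝ)|^3)⁻¹)
        * ENNReal.ofReal (((1:ℝ) + (h:ℝ)^2)⁻¹) := by
        rw [← ENNReal.tsum_prod (f := fun (m : ℤ) (h : ℤ) => ENNReal.ofReal (if m = 0 then (0:ℝ) else (|(m:ℝ)|^3)⁻¹) * ENNReal.ofReal (((1:ℝ) + (h:ℝ)^2)⁻¹))]
        exact tsum_congr heq
    _ = (∑' m : ℤ, ENNReal.ofReal (if m = 0 then (0:ℝ) else (|(m:ℝ)|^3)⁻¹))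
        * ∑' h : ℤ, ENNReal.ofReal (((1:ℝ) + (h:ℝ)^2)⁻¹) := by
        rw [← ENNReal.tsum_mul_right]
        exact tsum_congr fun m => ENNReal.tsum_mul_left
    _ < ⊤ := by
        apply ENNReal.mul_lt_top
        · rw [← ENNReal.ofReal_tsum_of_nonneg (fun m => ?_) summable_wm]
          · exact ENNReal.ofReal_lt_top
          · by_cases h0 : m = 0 <;> simp [h0] <;> positivity
        · exact tsum_ch_lt_top


def val (s : ℝ) (X : ℤ → Ω → ℝ) {q : ℕ} (m h : Fin q → ℤ) (a : ℤ) (ω : Ω) : ℝ :=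
  (a:ℝ) + ∑ j, (m j : ℝ) * ((h j : ℝ)^2 + X (h j) ω * Real.sqrt (1 + (h j : ℝ)^2) ^ (-s))

def prodw {q : ℕ} (m h : Fin q → ℤ) : ℝ :=
  ∏ j, (((m j : ℝ)^2) ^ (-2:ℝ) * ((1 + (h j : ℝ)^2) ^ (-2:ℝ)))

def eps (s γ : ℝ) {Q : ℕ} (m h : Fin (Q+1) → ℤ) : ℝ :=
  γ * (Finset.univ.inf' Finset.univ_nonempty fun j => Real.sqrt (1 + (h j : ℝ)^2)) ^ (-s)
    * prodw m h

def Ab (N : ℕ) {q : ℕ} (m h : Fin q → ℤ) : ℕ :=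
  2 * N * ∑ j, (m j).natAbs * (1 + (h j).natAbs^2)

def Idx : Type := (Q : ℕ) × ((Fin (Q+1) → ℤ) × (Fin (Q+1) → ℤ) × ℤ)

instance : Countable Idx := by unfold Idx; infer_instance

def adm (N : ℕ) (i : Idx) : Prop :=
  (∀ j, i.2.1 j ≠ 0) ∧ Function.Injective i.2.2.1 ∧ i.2.2.2.natAbs ≤ Ab N i.2.1 i.2.2.1

def Bad (s : ℝ) (X : ℤ → Ω → ℝ) (N : ℕ) (i : Idx) : Set Ω :=
  if adm N i then {ω | |val s X i.2.1 i.2.2.1 i.2.2.2 ω| < eps s (((N:ℝ))⁻¹^2) i.2.1 i.2.2.1}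
  else ∅

def Tail (X : ℤ → Ω → ℝ) (N : ℕ) (k : ℤ) : Set Ω :=
  {ω | (N:ℝ) * (1 + (k:ℝ)^2) < |X k ω|}

def pbound (N : ℕ) (i : Idx) : ℝ≥0∞ :=
  if adm N i then ENNReal.ofReal (((N:ℝ))⁻¹^2 * prodw i.2.1 i.2.2.1) else 0

lemma sqrt_one_le (k : ℤ) : 1 ≤ Real.sqrt (1 + (k:ℝ)^2) := by
  have h4 : (0:ℝ) ≤ 1 + (k:ℝ)^2 := by positivity
  nlinarith [Real.sq_sqrt h4, Real.sqrt_nonneg (1 + (k:ℝ)^2), sq_nonneg ((k:ℝ)),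
    sq_nonneg (Real.sqrt (1 + (k:ℝ)^2) - 1)]

lemma c_pos {s : ℝ} (k : ℤ) : 0 < Real.sqrt (1 + (k:ℝ)^2) ^ (-s) :=
  Real.rpow_pos_of_pos (lt_of_lt_of_le one_pos (sqrt_one_le k)) _

lemma c_le_one {s : ℝ} (hs : 0 < s) (k : ℤ) : Real.sqrt (1 + (k:ℝ)^2) ^ (-s) ≤ 1 :=
  Real.rpow_le_one_of_one_le_of_nonpos (sqrt_one_le k) (by linarith)

lemma rpow_neg_two_eq {x : ℝ} (hx : 0 ≤ x) : x ^ (-2:ℝ) = (x^2)⁻¹ := by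
  rw [show (-2:ℝ) = -((2:ℕ):ℝ) by norm_num, Real.rpow_neg hx, Real.rpow_natCast]

lemma prodw_eq {q : ℕ} (m h : Fin q → ℤ) :
    prodw m h = ∏ j, ((((m j : ℝ)^2)^2)⁻¹ * (((1 + (h j : ℝ)^2)^2)⁻¹)) := by
  unfold prodw
  apply Finset.prod_congr rfl
  intro j _
  rw [rpow_neg_two_eq (sq_nonneg _), rpow_neg_two_eq (by positivity)]

lemma prodw_nonneg {q : ℕ} (m h : Fin q → ℤ) : 0 ≤ prodw m h := by
  rw [prodw_eq]
  apply Finset.prod_nonneg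
  intro j _
  positivity

lemma prodw_le_one {q : ℕ} (m h : Fin q → ℤ) (hm : ∀ j, m j ≠ 0) : prodw m h ≤ 1 := by
  rw [prodw_eq]
  apply Finset.prod_le_one
  · intro j _; positivity
  · intro j _
    have h1 : (1:ℝ) ≤ (m j : ℝ)^2 := by
      have : (1:ℝ) ≤ |(m j : ℝ)| := by
        rw [← Int.cast_abs]
        exact_mod_cast Int.one_le_abs (hm j)
      nlinarith [sq_abs ((m j : ℝ))]
    have h2 : (1:ℝ) ≤ 1 + (h j:ℝ)^2 := by nlinarith [sq_nonneg ((h j : ℝ))]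
    calc (((m j : ℝ)^2)^2)⁻¹ * (((1 + (h j : ℝ)^2)^2)⁻¹)
        ≤ 1 * 1 := by
          apply mul_le_mul _ _ (by positivity) (by norm_num)
          · rw [inv_le_one_iff₀]; right; nlinarith
          · rw [inv_le_one_iff₀]; right; nlinarith
      _ = 1 := by norm_num

lemma eps_le_one {s : ℝ} (hs : 0 < s) {γ : ℝ} (hγ0 : 0 ≤ γ) (hγ1 : γ ≤ 1)
    {Q : ℕ} (m h : Fin (Q+1) → ℤ) (hm : ∀ j, m j ≠ 0) : eps s γ m h ≤ 1 := by
  unfold eps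
  have hinf : 1 ≤ Finset.univ.inf' Finset.univ_nonempty fun j => Real.sqrt (1 + (h j : ℝ)^2) := by
    apply Finset.le_inf'
    intro j _
    exact sqrt_one_le (h j)
  have h1 : (Finset.univ.inf' Finset.univ_nonempty fun j => Real.sqrt (1 + (h j : ℝ)^2)) ^ (-s) ≤ 1 :=
    Real.rpow_le_one_of_one_le_of_nonpos hinf (by linarith)
  have h2 : (0:ℝ) ≤ (Finset.univ.inf' Finset.univ_nonempty fun j => Real.sqrt (1 + (h j : ℝ)^2)) ^ (-s) :=
    le_of_lt (Real.rpow_pos_of_pos (by linarith) _)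
  calc γ * _ * prodw m h ≤ 1 * 1 * 1 := by
        apply mul_le_mul (mul_le_mul hγ1 h1 h2 (by norm_num)) (prodw_le_one m h hm)
          (prodw_nonneg m h) (by norm_num)
    _ = 1 := by norm_num


def wr (p : ℤ × ℤ) : ℝ :=
  (if p.1 = 0 then (0:ℝ) else (|((p.1:ℤ):ℝ)|^3)⁻¹) * ((1:ℝ) + ((p.2:ℤ):ℝ)^2)⁻¹

lemma wr_nonneg (p : ℤ × ℤ) : 0 ≤ wr p := by
  unfold wr
  by_cases h : p.1 = 0 <;> simp [h] <;> positivity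

def wgt (p : ℤ × ℤ) : ℝ≥0∞ := ENNReal.ofReal (wr p)

lemma wgt_eq (p : ℤ × ℤ) : wgt p = ENNReal.ofReal (wr p) := rfl

lemma tsum_wgt_lt_top' : (∑' p : ℤ × ℤ, wgt p) < ⊤ := tsum_wgt_lt_top

lemma good_pointwise (s : ℝ) (hs : 0 < s) (X : ℤ → Ω → ℝ) (N : ℕ) (hN : 1 ≤ N) (ω : Ω)
    (hB : ∀ i : Idx, ω ∉ Bad s X N i) (hT : ∀ k, ω ∉ Tail X N k) :
    ∀ (q : ℕ) (hq : 1 ≤ q) (m : Fin q → ℤ),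
      (∀ j, m j ≠ 0) → ∀ h : Fin q → ℤ, Function.Injective h → ∀ a : ℤ,
      ((N:ℝ))⁻¹^2 * (Finset.univ.inf' ⟨⟨0, hq⟩, Finset.mem_univ _⟩
            fun j => Real.sqrt (1 + (h j : ℝ) ^ 2)) ^ (-s) *
          ∏ j, (((m j : ℝ) ^ 2) ^ (-2 : ℝ) * ((1 + (h j : ℝ) ^ 2) ^ (-2 : ℝ)))
        ≤ |val s X m h a ω| := by
  intro q hq m hm h hinj a
  obtain ⟨Q, rfl⟩ : ∃ Q, q = Q + 1 := ⟨q - 1, (Nat.succ_pred_eq_of_pos hq).symm⟩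
  have hγ0 : (0:ℝ) ≤ ((N:ℝ))⁻¹^2 := by positivity
  have hγ1 : ((N:ℝ))⁻¹^2 ≤ 1 := by
    have hN1 : (1:ℝ) ≤ (N:ℝ) := by exact_mod_cast hN
    have : (N:ℝ)⁻¹ ≤ 1 := by
      rw [inv_le_one_iff₀]; right; exact hN1
    nlinarith [inv_nonneg.mpr (le_trans zero_le_one hN1)]
  have hgoal_eq : (((N:ℝ))⁻¹^2 * (Finset.univ.inf' ⟨⟨0, hq⟩, Finset.mem_univ _⟩
            fun j => Real.sqrt (1 + (h j : ℝ) ^ 2)) ^ (-s) *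
          ∏ j, (((m j : ℝ) ^ 2) ^ (-2 : ℝ) * ((1 + (h j : ℝ) ^ 2) ^ (-2 : ℝ))))
      = eps s (((N:ℝ))⁻¹^2) m h := rfl
  rw [hgoal_eq]
  by_cases ha : a.natAbs ≤ Ab N m h
  · -- admissible: use the Bad event
    have hadm : adm N ⟨Q, (m, h, a)⟩ := ⟨hm, hinj, ha⟩
    have := hB ⟨Q, (m, h, a)⟩
    simp only [Bad, if_pos hadm] at this
    simp only [Set.mem_setOf_eq, not_lt] at this
    exact this
  · -- |a| large: trivial bound
    have heps : eps s (((N:ℝ))⁻¹^2) m h ≤ 1 := eps_le_one hs hγ0 hγ1 m h hm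
    have habs : (Ab N m h : ℝ) + 1 ≤ |(a:ℝ)| := by
      push_neg at ha
      rw [← Int.cast_abs]
      have : (Ab N m h : ℤ) + 1 ≤ |a| := by
        rw [Int.abs_eq_natAbs]
        exact_mod_cast ha
      exact_mod_cast this
    have hXb : ∀ k : ℤ, |X k ω| ≤ (N:ℝ) * (1 + (k:ℝ)^2) := by
      intro k
      have := hT k
      rw [Tail, Set.mem_setOf_eq, not_lt] at this
      exact this
    have hsum : |∑ j, (m j : ℝ) * ((h j : ℝ)^2 + X (h j) ω * Real.sqrt (1 + (h j : ℝ)^2) ^ (-s))|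
        ≤ (Ab N m h : ℝ) := by
      calc |∑ j, (m j : ℝ) * ((h j : ℝ)^2 + X (h j) ω * Real.sqrt (1 + (h j : ℝ)^2) ^ (-s))|
          ≤ ∑ j, |(m j : ℝ) * ((h j : ℝ)^2 + X (h j) ω * Real.sqrt (1 + (h j : ℝ)^2) ^ (-s))| :=
            Finset.abs_sum_le_sum_abs _ _
        _ ≤ ∑ j, 2 * (N:ℝ) * (|(m j : ℝ)| * (1 + (h j : ℝ)^2)) := by
            apply Finset.sum_le_sum
            intro j _
            rw [abs_mul]
            have h1 : |(h j : ℝ)^2 + X (h j) ω * Real.sqrt (1 + (h j : ℝ)^2) ^ (-s)|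
                ≤ 2 * (N:ℝ) * (1 + (h j : ℝ)^2) := by
              have hXc : |X (h j) ω * Real.sqrt (1 + (h j : ℝ)^2) ^ (-s)|
                  ≤ (N:ℝ) * (1 + (h j : ℝ)^2) := by
                rw [abs_mul]
                calc |X (h j) ω| * |Real.sqrt (1 + (h j : ℝ)^2) ^ (-s)|
                    ≤ ((N:ℝ) * (1 + (h j : ℝ)^2)) * 1 := by
                      apply mul_le_mul (hXb (h j)) _ (abs_nonneg _) (by positivity)
                      rw [abs_of_pos (c_pos (h j))]
                      exact c_le_one hs (h j)
                  _ = (N:ℝ) * (1 + (h j : ℝ)^2) := by ring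
              have hN1 : (1:ℝ) ≤ (N:ℝ) := by exact_mod_cast hN
              calc |(h j : ℝ)^2 + X (h j) ω * Real.sqrt (1 + (h j : ℝ)^2) ^ (-s)|
                  ≤ |(h j : ℝ)^2| + |X (h j) ω * Real.sqrt (1 + (h j : ℝ)^2) ^ (-s)| := abs_add_le _ _
                _ ≤ (h j : ℝ)^2 + (N:ℝ) * (1 + (h j : ℝ)^2) := by
                    rw [abs_of_nonneg (sq_nonneg _)]
                    linarith [hXc]
                _ ≤ 2 * (N:ℝ) * (1 + (h j : ℝ)^2) := by nlinarith [sq_nonneg ((h j : ℝ))]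
            calc |(m j : ℝ)| * |(h j : ℝ)^2 + X (h j) ω * Real.sqrt (1 + (h j : ℝ)^2) ^ (-s)|
                ≤ |(m j : ℝ)| * (2 * (N:ℝ) * (1 + (h j : ℝ)^2)) :=
                  mul_le_mul_of_nonneg_left h1 (abs_nonneg _)
              _ = 2 * (N:ℝ) * (|(m j : ℝ)| * (1 + (h j : ℝ)^2)) := by ring
        _ = (Ab N m h : ℝ) := by
            rw [Ab]
            push_cast [Nat.cast_natAbs]
            rw [Finset.mul_sum]
            apply Finset.sum_congr rfl
            intro j _
            push_cast [Nat.cast_natAbs]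
            rw [sq_abs]
    have hval : (1:ℝ) ≤ |val s X m h a ω| := by
      rw [val]
      calc (1:ℝ) = ((Ab N m h : ℝ) + 1) - (Ab N m h : ℝ) := by ring
        _ ≤ |(a:ℝ)| - |∑ j, (m j : ℝ) * ((h j : ℝ)^2 + X (h j) ω * Real.sqrt (1 + (h j : ℝ)^2) ^ (-s))| := by
            apply sub_le_sub habs hsum
        _ ≤ |(a:ℝ) + ∑ j, (m j : ℝ) * ((h j : ℝ)^2 + X (h j) ω * Real.sqrt (1 + (h j : ℝ)^2) ^ (-s))| := by
            have := abs_sub_abs_le_abs_sub ((a:ℝ))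
              (-(∑ j, (m j : ℝ) * ((h j : ℝ)^2 + X (h j) ω * Real.sqrt (1 + (h j : ℝ)^2) ^ (-s))))
            rw [abs_neg, sub_neg_eq_add] at this
            exact this
    linarith [heps, hval]

lemma bad_prob (s : ℝ) (μ : Measure Ω) [IsProbabilityMeasure μ]
    (X : ℤ → Ω → ℝ) (hmeas : ∀ k, Measurable (X k))
    (hindep : ProbabilityTheory.iIndepFun X μ)
    (hgauss : ∀ k, μ.map (X k) = ProbabilityTheory.gaussianReal 0 1)
    (N : ℕ) (i : Idx) :
    μ (Bad s X N i) ≤ pbound N i := by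
  rw [Bad, pbound]
  by_cases hadm : adm N i
  · rw [if_pos hadm, if_pos hadm]
    obtain ⟨Q, m, h, a⟩ := i
    obtain ⟨hm, hinj, -⟩ := hadm
    simp only at hm hinj ⊢
    -- choose the argmin j0
    obtain ⟨j0, -, hj0⟩ := Finset.exists_mem_eq_inf'
      (Finset.univ_nonempty (α := Fin (Q+1))) (fun j => Real.sqrt (1 + (h j : ℝ)^2))
    set c0 : ℝ := Real.sqrt (1 + (h j0 : ℝ)^2) ^ (-s) with hc0
    have hc0pos : 0 < c0 := c_pos (h j0)
    set t : ℝ := (m j0 : ℝ) * c0 with htdef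
    have hm0 : (1:ℝ) ≤ |(m j0 : ℝ)| := by
      rw [← Int.cast_abs]
      exact_mod_cast Int.one_le_abs (hm j0)
    have ht : t ≠ 0 := by
      rw [htdef]
      apply mul_ne_zero _ (ne_of_gt hc0pos)
      intro hcon
      rw [hcon] at hm0
      simp at hm0
      exact absurd hm0 (by norm_num)
    -- the function Z (everything except the j0 Gaussian)
    set Z : Ω → ℝ := fun ω => (a:ℝ) +
      (∑ j ∈ Finset.univ.erase j0,
        (m j : ℝ) * ((h j : ℝ)^2 + X (h j) ω * Real.sqrt (1 + (h j : ℝ)^2) ^ (-s)))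
      + (m j0 : ℝ) * (h j0 : ℝ)^2 with hZdef
    have hval_eq : ∀ ω, val s X m h a ω = Z ω + t * X (h j0) ω := by
      intro ω
      rw [val, hZdef]
      simp only
      rw [← Finset.sum_erase_add Finset.univ _ (Finset.mem_univ j0)]
      ring
    have hZmeas : Measurable Z := by
      apply Measurable.add
      apply Measurable.add measurable_const
      · apply Finset.measurable_sum
        intro j _
        apply Measurable.const_mul
        apply Measurable.const_add
        exact (hmeas (h j)).mul_const _
      · exact measurable_const
    -- independence of Z and X (h j0)
    set S : Finset ℤ := (Finset.univ.erase j0).image h with hSdef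
    have hk0 : h j0 ∉ S := by
      rw [hSdef]
      simp only [Finset.mem_image, not_exists]
      rintro j ⟨hj, hcon⟩
      have := hinj hcon
      rw [this] at hj
      exact (Finset.notMem_erase j0 _) hj
    have hdisj : Disjoint S ({h j0} : Finset ℤ) := by
      rw [Finset.disjoint_singleton_right]
      exact hk0
    have hIF := hindep.indepFun_finset S {h j0} hdisj hmeas
    set gZ : ({x // x ∈ S} → ℝ) → ℝ := fun v => (a:ℝ) +
      (∑ j ∈ (Finset.univ.erase j0).attach,
        (m j : ℝ) * ((h j : ℝ)^2 +
          v ⟨h j, Finset.mem_image_of_mem h j.2⟩ * Real.sqrt (1 + (h j : ℝ)^2) ^ (-s)))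
      + (m j0 : ℝ) * (h j0 : ℝ)^2 with hgZdef
    set gW : ({x // x ∈ ({h j0} : Finset ℤ)} → ℝ) → ℝ :=
      fun v => v ⟨h j0, Finset.mem_singleton_self _⟩ with hgWdef
    have hgZmeas : Measurable gZ := by
      apply Measurable.add
      apply Measurable.add measurable_const
      · apply Finset.measurable_sum
        intro j _
        apply Measurable.const_mul
        apply Measurable.const_add
        exact (measurable_pi_apply _).mul_const _
      · exact measurable_const
    have hgWmeas : Measurable gW := measurable_pi_apply _
    have hZcomp : Z = gZ ∘ (fun ω (i : {x // x ∈ S}) => X (↑i) ω) := by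
      funext ω
      rw [hZdef, hgZdef]
      simp only [Function.comp_apply]
      congr 1
      congr 1
      rw [← Finset.sum_attach (Finset.univ.erase j0)
        (fun j => (m j : ℝ) * ((h j : ℝ)^2 + X (h j) ω * Real.sqrt (1 + (h j : ℝ)^2) ^ (-s)))]
    have hWcomp : X (h j0) = gW ∘ (fun ω (i : {x // x ∈ ({h j0} : Finset ℤ)}) => X (↑i) ω) := by
      funext ω
      rfl
    have hind2 : IndepFun Z (X (h j0)) μ := by
      rw [hZcomp, hWcomp]
      exact hIF.comp hgZmeas hgWmeas
    -- apply anticoncentration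
    have hsub : {ω | |val s X m h a ω| < eps s (((N:ℝ))⁻¹^2) m h}
        ⊆ {ω | |Z ω + t * X (h j0) ω| ≤ eps s (((N:ℝ))⁻¹^2) m h} := by
      intro ω hω
      rw [Set.mem_setOf_eq] at hω ⊢
      rw [← hval_eq ω]
      exact le_of_lt hω
    calc μ {ω | |val s X m h a ω| < eps s (((N:ℝ))⁻¹^2) m h}
        ≤ μ {ω | |Z ω + t * X (h j0) ω| ≤ eps s (((N:ℝ))⁻¹^2) m h} := measure_mono hsub
      _ ≤ ENNReal.ofReal (eps s (((N:ℝ))⁻¹^2) m h / |t|) :=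
          anticoncentration μ hZmeas (hmeas (h j0)) hind2 (hgauss (h j0)) ht _
      _ ≤ ENNReal.ofReal (((N:ℝ))⁻¹^2 * prodw m h) := by
          apply ENNReal.ofReal_le_ofReal
          have htpos : 0 < |t| := abs_pos.mpr ht
          rw [div_le_iff₀ htpos]
          have heps_eq : eps s (((N:ℝ))⁻¹^2) m h = ((N:ℝ))⁻¹^2 * c0 * prodw m h := by
            rw [eps, hj0, hc0]
          rw [heps_eq]
          have habs_t : |t| = |(m j0 : ℝ)| * c0 := by
            rw [htdef, abs_mul, abs_of_pos hc0pos]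
          rw [habs_t]
          have hγ : (0:ℝ) ≤ ((N:ℝ))⁻¹^2 := by positivity
          nlinarith [prodw_nonneg m h, mul_nonneg (mul_nonneg hγ (le_of_lt hc0pos)) (prodw_nonneg m h)]
  · rw [if_neg hadm, if_neg hadm]
    simp

lemma a_sum_bound (N : ℕ) (hN : 1 ≤ N) (Q : ℕ) (m h : Fin (Q+1) → ℤ) :
    ∑' a : ℤ, pbound N ⟨Q, (m, h, a)⟩
    ≤ (if (∀ j, m j ≠ 0) ∧ Function.Injective h then
        ((5 * N : ℕ) : ℝ≥0∞) * (∑ j, (((m j).natAbs * (1 + (h j).natAbs^2) : ℕ) : ℝ≥0∞))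
          * ENNReal.ofReal (((N:ℝ))⁻¹^2 * prodw m h)
      else 0) := by
  by_cases hadm' : (∀ j, m j ≠ 0) ∧ Function.Injective h
  · rw [if_pos hadm']
    set A := Ab N m h with hA
    set P : ℝ≥0∞ := ENNReal.ofReal (((N:ℝ))⁻¹^2 * prodw m h) with hP
    have hsupp : ∀ a : ℤ, a ∉ Finset.Icc (-(A:ℤ)) (A:ℤ) → pbound N ⟨Q, (m, h, a)⟩ = 0 := by
      intro a ha
      simp only [pbound]; rw [if_neg]
      intro hcon
      apply ha
      rw [Finset.mem_Icc]
      have := hcon.2.2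
      simp only at this
      rw [← hA] at this
      omega
    rw [tsum_eq_sum hsupp]
    have hterm : ∀ a ∈ Finset.Icc (-(A:ℤ)) (A:ℤ), pbound N ⟨Q, (m, h, a)⟩ ≤ P := by
      intro a _
      simp only [pbound]
      split_ifs with hc
      · exact le_refl P
      · exact zero_le
    calc ∑ a ∈ Finset.Icc (-(A:ℤ)) (A:ℤ), pbound N ⟨Q, (m, h, a)⟩
        ≤ ∑ _a ∈ Finset.Icc (-(A:ℤ)) (A:ℤ), P := Finset.sum_le_sum hterm
      _ = ((Finset.Icc (-(A:ℤ)) (A:ℤ)).card : ℝ≥0∞) * P := by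
          rw [Finset.sum_const, nsmul_eq_mul]
      _ ≤ ((5 * N : ℕ) : ℝ≥0∞) * (∑ j, (((m j).natAbs * (1 + (h j).natAbs^2) : ℕ) : ℝ≥0∞)) * P := by
          apply mul_le_mul_left
          have hcard : (Finset.Icc (-(A:ℤ)) (A:ℤ)).card = 2 * A + 1 := by
            rw [Int.card_Icc]
            omega
          rw [hcard]
          have hsum1 : 1 ≤ ∑ j, (m j).natAbs * (1 + (h j).natAbs^2) := by
            have h0 : 1 ≤ (m 0).natAbs * (1 + (h 0).natAbs^2) := by
              have h1 : 1 ≤ (m 0).natAbs := Nat.one_le_iff_ne_zero.mpr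
                (Int.natAbs_ne_zero.mpr (hadm'.1 0))
              have h2 : 1 ≤ 1 + (h 0).natAbs^2 := by omega
              calc 1 = 1 * 1 := rfl
                _ ≤ (m 0).natAbs * (1 + (h 0).natAbs^2) := Nat.mul_le_mul h1 h2
            calc 1 ≤ (m 0).natAbs * (1 + (h 0).natAbs^2) := h0
              _ ≤ ∑ j, (m j).natAbs * (1 + (h j).natAbs^2) :=
                  Finset.single_le_sum (f := fun j => (m j).natAbs * (1 + (h j).natAbs^2))
                    (fun j _ => Nat.zero_le _) (Finset.mem_univ 0)
          have hA2 : 2 * A + 1 ≤ 5 * N * ∑ j, (m j).natAbs * (1 + (h j).natAbs^2) := by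
            rw [hA, Ab]
            have hNS : 1 ≤ N * ∑ j, (m j).natAbs * (1 + (h j).natAbs^2) :=
              Nat.one_le_iff_ne_zero.mpr (Nat.mul_ne_zero (by omega)
                (Nat.one_le_iff_ne_zero.mp hsum1))
            nlinarith [hNS]
          calc ((2 * A + 1 : ℕ) : ℝ≥0∞)
              ≤ ((5 * N * ∑ j, (m j).natAbs * (1 + (h j).natAbs^2) : ℕ) : ℝ≥0∞) := by
                exact_mod_cast Nat.cast_le.mpr hA2
            _ = ((5 * N : ℕ) : ℝ≥0∞) * (∑ j, (((m j).natAbs * (1 + (h j).natAbs^2) : ℕ) : ℝ≥0∞)) := by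
                push_cast
                ring
  · rw [if_neg hadm']
    have : ∀ a : ℤ, pbound N ⟨Q, (m, h, a)⟩ = 0 := by
      intro a
      simp only [pbound]; rw [if_neg]
      intro hcon
      exact hadm' ⟨hcon.1, hcon.2.1⟩
    simp [this]

lemma core_pointwise (Q : ℕ) (m h : Fin (Q+1) → ℤ) (hm : ∀ j, m j ≠ 0)
    (hinj : Function.Injective h) (j : Fin (Q+1)) {W : ℕ} (hW : 0 < W) :
    (((m j).natAbs * (1 + (h j).natAbs^2) : ℕ) : ℝ) * prodw m h
      ≤ (W:ℝ)^(2*W+1) * ((W:ℝ)^Q)⁻¹ * ∏ i, wr (m i, h i) := by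
  have habs : ∀ i, (1:ℝ) ≤ |(m i : ℝ)| := by
    intro i
    rw [← Int.cast_abs]
    exact_mod_cast Int.one_le_abs (hm i)
  have habs' : ∀ i, (0:ℝ) < |(m i : ℝ)| := fun i => lt_of_lt_of_le one_pos (habs i)
  have hwr : ∀ i, wr (m i, h i) = (|(m i : ℝ)|^3)⁻¹ * ((1:ℝ) + (h i : ℝ)^2)⁻¹ := by
    intro i
    rw [wr, if_neg (hm i)]
  set pwf : Fin (Q+1) → ℝ :=
    fun i => (((m i : ℝ)^2)^2)⁻¹ * (((1 + (h i : ℝ)^2)^2)⁻¹) with hpwf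
  have hpwf_nonneg : ∀ i, 0 ≤ pwf i := fun i => by rw [hpwf]; positivity
  have hx : (((m j).natAbs * (1 + (h j).natAbs^2) : ℕ) : ℝ)
      = |(m j : ℝ)| * (1 + (h j : ℝ)^2) := by
    push_cast [Nat.cast_natAbs]
    rw [sq_abs]
  -- claim A : x_j * pwf j = wr j
  have hA : (((m j).natAbs * (1 + (h j).natAbs^2) : ℕ) : ℝ) * pwf j = wr (m j, h j) := by
    rw [hx, hpwf, hwr]
    simp only
    have h4 : (((m j : ℝ))^2)^2 = |(m j : ℝ)|^4 := by
      rw [← sq_abs ((m j : ℝ))]; ring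
    rw [h4]
    have hne1 : |(m j : ℝ)| ≠ 0 := ne_of_gt (habs' j)
    have hne2 : (1:ℝ) + (h j : ℝ)^2 ≠ 0 := by positivity
    field_simp
  -- claim B : pwf i ≤ max⁻¹ * wr i
  have hB : ∀ i, pwf i ≤ ((max 1 ((h i).natAbs^2) : ℕ) : ℝ)⁻¹ * wr (m i, h i) := by
    intro i
    rw [hpwf, hwr]
    have hmax : ((max 1 ((h i).natAbs^2) : ℕ) : ℝ) ≤ 1 + (h i : ℝ)^2 := by
      rcases max_cases 1 ((h i).natAbs^2) with ⟨hc, -⟩ | ⟨hc, -⟩ <;> rw [hc]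
      · push_cast
        nlinarith [sq_nonneg ((h i : ℝ))]
      · push_cast [Nat.cast_natAbs]
        rw [sq_abs]
        norm_num
    have hmaxpos : (0:ℝ) < ((max 1 ((h i).natAbs^2) : ℕ) : ℝ) := by
      have : 1 ≤ max 1 ((h i).natAbs^2) := le_max_left _ _
      exact_mod_cast lt_of_lt_of_le zero_lt_one (by exact_mod_cast this)
    have hh1 : (0:ℝ) < 1 + (h i : ℝ)^2 := by positivity
    have hstep1 : (((m i : ℝ)^2)^2)⁻¹ ≤ (|(m i : ℝ)|^3)⁻¹ := by
      apply inv_anti₀ (pow_pos (habs' i) 3)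
      rw [← sq_abs ((m i : ℝ))]
      calc |(m i : ℝ)|^3 = |(m i : ℝ)|^3 * 1 := by ring
        _ ≤ |(m i : ℝ)|^3 * |(m i : ℝ)| :=
            mul_le_mul_of_nonneg_left (habs i) (by positivity)
        _ = (|(m i : ℝ)|^2)^2 := by ring
    have hstep2 : (((1 + (h i : ℝ)^2)^2)⁻¹ : ℝ)
        ≤ ((max 1 ((h i).natAbs^2) : ℕ) : ℝ)⁻¹ * ((1:ℝ) + (h i : ℝ)^2)⁻¹ := by
      rw [← mul_inv]
      apply inv_anti₀ (by positivity)
      nlinarith [hmax, hh1]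
    calc (((m i : ℝ)^2)^2)⁻¹ * (((1 + (h i : ℝ)^2)^2)⁻¹)
        ≤ (|(m i : ℝ)|^3)⁻¹ * (((max 1 ((h i).natAbs^2) : ℕ) : ℝ)⁻¹ * ((1:ℝ) + (h i : ℝ)^2)⁻¹) := by
          apply mul_le_mul hstep1 hstep2 (by positivity) (by positivity)
      _ = ((max 1 ((h i).natAbs^2) : ℕ) : ℝ)⁻¹ * ((|(m i : ℝ)|^3)⁻¹ * ((1:ℝ) + (h i : ℝ)^2)⁻¹) := by
          ring
  -- claim C : the injectivity gain
  have hC : ∏ i ∈ Finset.univ.erase j, ((max 1 ((h i).natAbs^2) : ℕ) : ℝ)⁻¹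
      ≤ (W:ℝ)^(2*W+1) * ((W:ℝ)^Q)⁻¹ := by
    set S : Finset ℤ := (Finset.univ.erase j).image h with hS
    have hcard : S.card = Q := by
      rw [hS, Finset.card_image_of_injOn (Function.Injective.injOn hinj),
        Finset.card_erase_of_mem (Finset.mem_univ j)]
      simp
    have hnat : W ^ Q ≤ W ^ (2*W+1) * ∏ i ∈ Finset.univ.erase j, max 1 ((h i).natAbs^2) := by
      have := prod_max_lower hW S
      rw [hcard] at this
      rwa [hS, Finset.prod_image (fun x _ y _ hxy => hinj hxy)] at this
    have hreal : ((W:ℝ))^Q ≤ (W:ℝ)^(2*W+1) * ∏ i ∈ Finset.univ.erase j,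
        ((max 1 ((h i).natAbs^2) : ℕ) : ℝ) := by
      have h0 := (Nat.cast_le (α := ℝ)).mpr hnat
      rw [Nat.cast_mul, Nat.cast_pow, Nat.cast_pow, Nat.cast_prod] at h0
      exact h0
    have hprodpos : (0:ℝ) < ∏ i ∈ Finset.univ.erase j, ((max 1 ((h i).natAbs^2) : ℕ) : ℝ) := by
      apply Finset.prod_pos
      intro i _
      have : 1 ≤ max 1 ((h i).natAbs^2) := le_max_left _ _
      exact_mod_cast lt_of_lt_of_le zero_lt_one (by exact_mod_cast this)
    rw [Finset.prod_inv_distrib]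
    have hWQ : (0:ℝ) < (W:ℝ)^Q := by positivity
    set P : ℝ := ∏ i ∈ Finset.univ.erase j, ((max 1 ((h i).natAbs^2) : ℕ) : ℝ) with hPdef
    have hPpos : 0 < P := hprodpos
    have hkey : P⁻¹ * ((W:ℝ)^Q) ≤ (W:ℝ)^(2*W+1) := by
      calc P⁻¹ * ((W:ℝ)^Q) ≤ P⁻¹ * ((W:ℝ)^(2*W+1) * P) :=
            mul_le_mul_of_nonneg_left hreal (inv_nonneg.mpr (le_of_lt hPpos))
        _ = (W:ℝ)^(2*W+1) := by field_simp
    calc P⁻¹ = P⁻¹ * ((W:ℝ)^Q) * ((W:ℝ)^Q)⁻¹ := by field_simp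
      _ ≤ (W:ℝ)^(2*W+1) * ((W:ℝ)^Q)⁻¹ :=
          mul_le_mul_of_nonneg_right hkey (inv_nonneg.mpr (le_of_lt hWQ))
  calc (((m j).natAbs * (1 + (h j).natAbs^2) : ℕ) : ℝ) * prodw m h
      = (((m j).natAbs * (1 + (h j).natAbs^2) : ℕ) : ℝ) * ∏ i, pwf i := by rw [prodw_eq]
    _ = ((((m j).natAbs * (1 + (h j).natAbs^2) : ℕ) : ℝ) * pwf j)
        * ∏ i ∈ Finset.univ.erase j, pwf i := by
        rw [← Finset.mul_prod_erase Finset.univ pwf (Finset.mem_univ j)]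
        ring
    _ = wr (m j, h j) * ∏ i ∈ Finset.univ.erase j, pwf i := by rw [hA]
    _ ≤ wr (m j, h j) * ∏ i ∈ Finset.univ.erase j,
        (((max 1 ((h i).natAbs^2) : ℕ) : ℝ)⁻¹ * wr (m i, h i)) := by
        apply mul_le_mul_of_nonneg_left _ (wr_nonneg _)
        exact Finset.prod_le_prod (fun i _ => hpwf_nonneg i) (fun i _ => hB i)
    _ = (∏ i ∈ Finset.univ.erase j, ((max 1 ((h i).natAbs^2) : ℕ) : ℝ)⁻¹) *
        (wr (m j, h j) * ∏ i ∈ Finset.univ.erase j, wr (m i, h i)) := by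
        rw [Finset.prod_mul_distrib]
        ring
    _ = (∏ i ∈ Finset.univ.erase j, ((max 1 ((h i).natAbs^2) : ℕ) : ℝ)⁻¹)
        * ∏ i, wr (m i, h i) := by
        rw [Finset.mul_prod_erase Finset.univ (fun i => wr (m i, h i)) (Finset.mem_univ j)]
    _ ≤ (W:ℝ)^(2*W+1) * ((W:ℝ)^Q)⁻¹ * ∏ i, wr (m i, h i) :=
        mul_le_mul_of_nonneg_right hC (Finset.prod_nonneg (fun i _ => wr_nonneg _))

lemma core_pointwise_E (N : ℕ) (Q : ℕ) (m h : Fin (Q+1) → ℤ) (hm : ∀ j, m j ≠ 0)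
    (hinj : Function.Injective h) (j : Fin (Q+1)) {W : ℕ} (hW : 0 < W) :
    (((m j).natAbs * (1 + (h j).natAbs^2) : ℕ) : ℝ≥0∞)
        * ENNReal.ofReal (((N:ℝ))⁻¹^2 * prodw m h)
      ≤ ENNReal.ofReal (((N:ℝ))⁻¹^2) * ((W:ℝ≥0∞)^(2*W+1) * ((W:ℝ≥0∞)^Q)⁻¹)
        * ∏ i, wgt (m i, h i) := by
  set x : ℕ := (m j).natAbs * (1 + (h j).natAbs^2) with hx
  have hγ : (0:ℝ) ≤ ((N:ℝ))⁻¹^2 := by positivity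
  have hlhs : ((x:ℕ) : ℝ≥0∞) * ENNReal.ofReal (((N:ℝ))⁻¹^2 * prodw m h)
      = ENNReal.ofReal (((N:ℝ))⁻¹^2) * ENNReal.ofReal ((x:ℝ) * prodw m h) := by
    rw [ENNReal.ofReal_mul hγ, ← ENNReal.ofReal_natCast x,
      ENNReal.ofReal_mul (by positivity : (0:ℝ) ≤ (x:ℝ))]
    ring
  rw [hlhs]
  rw [mul_assoc]
  apply mul_le_mul_right
  calc ENNReal.ofReal ((x:ℝ) * prodw m h)
      ≤ ENNReal.ofReal ((W:ℝ)^(2*W+1) * ((W:ℝ)^Q)⁻¹ * ∏ i, wr (m i, h i)) :=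
        ENNReal.ofReal_le_ofReal (core_pointwise Q m h hm hinj j hW)
    _ = ((W:ℝ≥0∞)^(2*W+1) * ((W:ℝ≥0∞)^Q)⁻¹) * ∏ i, wgt (m i, h i) := by
        rw [ENNReal.ofReal_mul (by positivity), ENNReal.ofReal_mul (by positivity),
          ENNReal.ofReal_prod_of_nonneg (fun i _ => wr_nonneg _)]
        congr 1
        congr 1
        · rw [ENNReal.ofReal_pow (by positivity), ENNReal.ofReal_natCast]
        · rw [ENNReal.ofReal_inv_of_pos (by positivity), ENNReal.ofReal_pow (by positivity),
            ENNReal.ofReal_natCast]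

lemma master_sum : ∃ C : ℝ≥0∞, C ≠ ⊤ ∧ ∀ N : ℕ, 1 ≤ N →
    ∑' i : Idx, pbound N i ≤ C * ((N:ℝ≥0∞))⁻¹ := by
  obtain ⟨W0, hW0⟩ := ENNReal.exists_nat_gt (ne_of_lt tsum_wgt_lt_top')
  set W : ℕ := 4 * W0 + 4 with hWdef
  have hWpos : 0 < W := by omega
  have hWne0 : ((W:ℝ≥0∞)) ≠ 0 := by exact Nat.cast_ne_zero.mpr (by omega)
  have hWnetop : ((W:ℝ≥0∞)) ≠ ⊤ := ENNReal.natCast_ne_top W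
  refine ⟨10 * (W:ℝ≥0∞)^(2*W+2), ?_, ?_⟩
  · exact ENNReal.mul_ne_top (by simp) (ENNReal.pow_ne_top hWnetop)
  intro N hN
  have hNne0 : ((N:ℝ≥0∞)) ≠ 0 := by exact Nat.cast_ne_zero.mpr (by omega)
  have hNnetop : ((N:ℝ≥0∞)) ≠ ⊤ := ENNReal.natCast_ne_top N
  have hNposR : (0:ℝ) < (N:ℝ) := by exact_mod_cast Nat.pos_of_ne_zero (by omega)
  set c0E : ℝ≥0∞ := ∑' p : ℤ × ℤ, wgt p with hc0E
  have hc0W : c0E ≤ ((W0:ℝ≥0∞)) + 1 := le_trans (le_of_lt hW0) (le_self_add)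
  -- the γ-constant
  have hγE : ENNReal.ofReal (((N:ℝ))⁻¹^2) = (((N:ℝ≥0∞))⁻¹)^2 := by
    rw [ENNReal.ofReal_pow (by positivity), ENNReal.ofReal_inv_of_pos hNposR,
      ENNReal.ofReal_natCast]
  -- per-(Q,j) bound for the (m,h)-double sum
  have hmh : ∀ (Q : ℕ) (j : Fin (Q+1)),
      (∑' (m : Fin (Q+1) → ℤ) (h : Fin (Q+1) → ℤ),
        (if (∀ j', m j' ≠ 0) ∧ Function.Injective h then
          (((m j).natAbs * (1 + (h j).natAbs^2) : ℕ) : ℝ≥0∞)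
            * ENNReal.ofReal (((N:ℝ))⁻¹^2 * prodw m h)
        else 0))
      ≤ (((N:ℝ≥0∞))⁻¹)^2 * ((W:ℝ≥0∞)^(2*W+1) * ((W:ℝ≥0∞)^Q)⁻¹) * c0E^(Q+1) := by
    intro Q j
    have hpt : ∀ (m h : Fin (Q+1) → ℤ),
        (if (∀ j', m j' ≠ 0) ∧ Function.Injective h then
          (((m j).natAbs * (1 + (h j).natAbs^2) : ℕ) : ℝ≥0∞)
            * ENNReal.ofReal (((N:ℝ))⁻¹^2 * prodw m h)
        else 0)
        ≤ ENNReal.ofReal (((N:ℝ))⁻¹^2) * ((W:ℝ≥0∞)^(2*W+1) * ((W:ℝ≥0∞)^Q)⁻¹)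
            * ∏ i, wgt (m i, h i) := by
      intro m h
      split_ifs with hc
      · exact core_pointwise_E N Q m h hc.1 hc.2 j hWpos
      · exact zero_le
    calc (∑' (m : Fin (Q+1) → ℤ) (h : Fin (Q+1) → ℤ),
        (if (∀ j', m j' ≠ 0) ∧ Function.Injective h then
          (((m j).natAbs * (1 + (h j).natAbs^2) : ℕ) : ℝ≥0∞)
            * ENNReal.ofReal (((N:ℝ))⁻¹^2 * prodw m h)
        else 0))
        ≤ ∑' (m : Fin (Q+1) → ℤ) (h : Fin (Q+1) → ℤ),
            ENNReal.ofReal (((N:ℝ))⁻¹^2) * ((W:ℝ≥0∞)^(2*W+1) * ((W:ℝ≥0∞)^Q)⁻¹)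
              * ∏ i, wgt (m i, h i) := by
          apply ENNReal.tsum_le_tsum
          intro m
          apply ENNReal.tsum_le_tsum
          intro h
          exact hpt m h
      _ = ENNReal.ofReal (((N:ℝ))⁻¹^2) * ((W:ℝ≥0∞)^(2*W+1) * ((W:ℝ≥0∞)^Q)⁻¹)
            * ∑' (m : Fin (Q+1) → ℤ) (h : Fin (Q+1) → ℤ), ∏ i, wgt (m i, h i) := by
          rw [← ENNReal.tsum_mul_left]
          apply tsum_congr
          intro m
          rw [← ENNReal.tsum_mul_left]
      _ = ENNReal.ofReal (((N:ℝ))⁻¹^2) * ((W:ℝ≥0∞)^(2*W+1) * ((W:ℝ≥0∞)^Q)⁻¹) * c0E^(Q+1) := by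
          congr 1
          rw [← ENNReal.tsum_prod (f := fun (m : Fin (Q+1) → ℤ) (h : Fin (Q+1) → ℤ) =>
            ∏ i, wgt (m i, h i))]
          rw [← Equiv.tsum_eq (Equiv.arrowProdEquivProdArrow (Fin (Q+1)) (fun _ => ℤ) (fun _ => ℤ))
            (fun p => ∏ i, wgt (p.1 i, p.2 i))]
          calc ∑' (f : Fin (Q+1) → ℤ × ℤ), ∏ i, wgt (f i)
              = ∏ _i : Fin (Q+1), ∑' x : ℤ × ℤ, wgt x := tsum_pi_prod (Q+1) (fun _ => wgt)
            _ = c0E^(Q+1) := by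
                rw [Finset.prod_const, Finset.card_univ, Fintype.card_fin]
      _ = (((N:ℝ≥0∞))⁻¹)^2 * ((W:ℝ≥0∞)^(2*W+1) * ((W:ℝ≥0∞)^Q)⁻¹) * c0E^(Q+1) := by
          rw [hγE]
  -- per-Q bound
  have hQbound : ∀ Q : ℕ,
      (∑' (m : Fin (Q+1) → ℤ) (h : Fin (Q+1) → ℤ) (a : ℤ), pbound N ⟨Q, (m, h, a)⟩)
      ≤ 5 * ((N:ℝ≥0∞))⁻¹ * (W:ℝ≥0∞)^(2*W+2) * ((2:ℝ≥0∞)^(Q+1))⁻¹ := by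
    intro Q
    have h5N : ((5 * N : ℕ) : ℝ≥0∞) * (((N:ℝ≥0∞))⁻¹)^2 = 5 * ((N:ℝ≥0∞))⁻¹ := by
      push_cast
      rw [sq]
      rw [show (5:ℝ≥0∞) * (N:ℝ≥0∞) * ((((N:ℝ≥0∞))⁻¹) * (((N:ℝ≥0∞))⁻¹))
        = 5 * ((N:ℝ≥0∞) * (((N:ℝ≥0∞))⁻¹)) * (((N:ℝ≥0∞))⁻¹) by ring]
      rw [ENNReal.mul_inv_cancel hNne0 hNnetop, mul_one]
    calc (∑' (m : Fin (Q+1) → ℤ) (h : Fin (Q+1) → ℤ) (a : ℤ), pbound N ⟨Q, (m, h, a)⟩)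
        ≤ ∑' (m : Fin (Q+1) → ℤ) (h : Fin (Q+1) → ℤ),
            (if (∀ j, m j ≠ 0) ∧ Function.Injective h then
              ((5 * N : ℕ) : ℝ≥0∞) * (∑ j, (((m j).natAbs * (1 + (h j).natAbs^2) : ℕ) : ℝ≥0∞))
                * ENNReal.ofReal (((N:ℝ))⁻¹^2 * prodw m h)
            else 0) := by
          apply ENNReal.tsum_le_tsum
          intro m
          apply ENNReal.tsum_le_tsum
          intro h
          exact a_sum_bound N hN Q m h
      _ ≤ ∑' (m : Fin (Q+1) → ℤ) (h : Fin (Q+1) → ℤ),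
            ∑ j, ((5 * N : ℕ) : ℝ≥0∞) *
              (if (∀ j', m j' ≠ 0) ∧ Function.Injective h then
                (((m j).natAbs * (1 + (h j).natAbs^2) : ℕ) : ℝ≥0∞)
                  * ENNReal.ofReal (((N:ℝ))⁻¹^2 * prodw m h)
              else 0) := by
          apply ENNReal.tsum_le_tsum
          intro m
          apply ENNReal.tsum_le_tsum
          intro h
          split_ifs with hc
          · apply le_of_eq
            rw [mul_assoc, Finset.sum_mul, Finset.mul_sum]
          · simp
      _ = ∑ j, ((5 * N : ℕ) : ℝ≥0∞) * ∑' (m : Fin (Q+1) → ℤ) (h : Fin (Q+1) → ℤ),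
              (if (∀ j', m j' ≠ 0) ∧ Function.Injective h then
                (((m j).natAbs * (1 + (h j).natAbs^2) : ℕ) : ℝ≥0∞)
                  * ENNReal.ofReal (((N:ℝ))⁻¹^2 * prodw m h)
              else 0) := by
          have h1 : ∀ m : Fin (Q+1) → ℤ,
              (∑' (h : Fin (Q+1) → ℤ), ∑ j, ((5 * N : ℕ) : ℝ≥0∞) *
                (if (∀ j', m j' ≠ 0) ∧ Function.Injective h then
                  (((m j).natAbs * (1 + (h j).natAbs^2) : ℕ) : ℝ≥0∞)
                    * ENNReal.ofReal (((N:ℝ))⁻¹^2 * prodw m h)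
                else 0))
              = ∑ j, ∑' (h : Fin (Q+1) → ℤ), ((5 * N : ℕ) : ℝ≥0∞) *
                (if (∀ j', m j' ≠ 0) ∧ Function.Injective h then
                  (((m j).natAbs * (1 + (h j).natAbs^2) : ℕ) : ℝ≥0∞)
                    * ENNReal.ofReal (((N:ℝ))⁻¹^2 * prodw m h)
                else 0) :=
            fun m => Summable.tsum_finsetSum (fun _ _ => ENNReal.summable)
          rw [tsum_congr h1, Summable.tsum_finsetSum (fun _ _ => ENNReal.summable)]
          apply Finset.sum_congr rfl
          intro j _
          rw [← ENNReal.tsum_mul_left]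
          apply tsum_congr
          intro m
          rw [← ENNReal.tsum_mul_left]
      _ ≤ ∑ _j : Fin (Q+1), ((5 * N : ℕ) : ℝ≥0∞) *
            ((((N:ℝ≥0∞))⁻¹)^2 * ((W:ℝ≥0∞)^(2*W+1) * ((W:ℝ≥0∞)^Q)⁻¹) * c0E^(Q+1)) := by
          apply Finset.sum_le_sum
          intro j _
          exact mul_le_mul_right (hmh Q j) _
      _ = ((Q:ℝ≥0∞)+1) * (((5 * N : ℕ) : ℝ≥0∞) * (((N:ℝ≥0∞))⁻¹)^2)
            * (((W:ℝ≥0∞)^(2*W+1) * ((W:ℝ≥0∞)^Q)⁻¹) * c0E^(Q+1)) := by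
          rw [Finset.sum_const, Finset.card_univ, Fintype.card_fin, nsmul_eq_mul]
          push_cast
          ring
      _ ≤ 5 * ((N:ℝ≥0∞))⁻¹ * (W:ℝ≥0∞)^(2*W+2) * ((2:ℝ≥0∞)^(Q+1))⁻¹ := by
          rw [h5N]
          have h2ne0 : ((2:ℝ≥0∞)^(Q+1)) ≠ 0 := pow_ne_zero _ (by norm_num)
          have h2netop : ((2:ℝ≥0∞)^(Q+1)) ≠ ⊤ := ENNReal.pow_ne_top (by norm_num)
          have hQne0 : ((W:ℝ≥0∞)^Q) ≠ 0 := pow_ne_zero _ hWne0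
          have hQnetop : ((W:ℝ≥0∞)^Q) ≠ ⊤ := ENNReal.pow_ne_top hWnetop
          have hkey : ((2:ℝ≥0∞)*((W0:ℝ≥0∞)+1))^(Q+1) * (2:ℝ≥0∞)^(Q+1) = (W:ℝ≥0∞)^(Q+1) := by
            rw [← mul_pow]
            congr 1
            rw [hWdef]
            push_cast
            ring
          have hsplit : ((2:ℝ≥0∞)*((W0:ℝ≥0∞)+1))^(Q+1)
              = (W:ℝ≥0∞)^(Q+1) * ((2:ℝ≥0∞)^(Q+1))⁻¹ := by
            rw [← hkey, mul_assoc, ENNReal.mul_inv_cancel h2ne0 h2netop, mul_one]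
          have hmain : ((Q:ℝ≥0∞)+1) * (((W:ℝ≥0∞)^(2*W+1) * ((W:ℝ≥0∞)^Q)⁻¹) * c0E^(Q+1))
              ≤ (W:ℝ≥0∞)^(2*W+2) * ((2:ℝ≥0∞)^(Q+1))⁻¹ := by
            have hQ1 : ((Q:ℝ≥0∞)+1) ≤ (2:ℝ≥0∞)^(Q+1) := by
              have hn : (Q+1 : ℕ) ≤ 2^(Q+1) := le_of_lt Nat.lt_two_pow_self
              calc ((Q:ℝ≥0∞)+1) = ((Q+1 : ℕ) : ℝ≥0∞) := by push_cast; ring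
                _ ≤ ((2^(Q+1) : ℕ) : ℝ≥0∞) := by exact_mod_cast hn
                _ = (2:ℝ≥0∞)^(Q+1) := by push_cast; ring
            have hc0p : c0E^(Q+1) ≤ (((W0:ℝ≥0∞))+1)^(Q+1) := pow_le_pow_left₀ zero_le hc0W _
            calc ((Q:ℝ≥0∞)+1) * (((W:ℝ≥0∞)^(2*W+1) * ((W:ℝ≥0∞)^Q)⁻¹) * c0E^(Q+1))
                ≤ (2:ℝ≥0∞)^(Q+1) * (((W:ℝ≥0∞)^(2*W+1) * ((W:ℝ≥0∞)^Q)⁻¹)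
                    * (((W0:ℝ≥0∞))+1)^(Q+1)) :=
                  mul_le_mul' hQ1 (mul_le_mul' (le_refl _) hc0p)
              _ = ((W:ℝ≥0∞)^(2*W+1) * ((W:ℝ≥0∞)^Q)⁻¹)
                    * (((2:ℝ≥0∞)*((W0:ℝ≥0∞)+1))^(Q+1)) := by
                  rw [mul_pow]
                  ring
              _ = ((W:ℝ≥0∞)^(2*W+1) * ((W:ℝ≥0∞)^Q)⁻¹)
                    * ((W:ℝ≥0∞)^(Q+1) * ((2:ℝ≥0∞)^(Q+1))⁻¹) := by rw [hsplit]
              _ = (W:ℝ≥0∞)^(2*W+2) * ((2:ℝ≥0∞)^(Q+1))⁻¹ := by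
                  rw [pow_succ ((W:ℝ≥0∞)) Q, show 2*W+2 = (2*W+1)+1 from rfl,
                    pow_succ ((W:ℝ≥0∞)) (2*W+1)]
                  calc (W:ℝ≥0∞)^(2*W+1) * ((W:ℝ≥0∞)^Q)⁻¹
                      * ((W:ℝ≥0∞)^Q * (W:ℝ≥0∞) * ((2:ℝ≥0∞)^(Q+1))⁻¹)
                      = (W:ℝ≥0∞)^(2*W+1) * (W:ℝ≥0∞) * ((2:ℝ≥0∞)^(Q+1))⁻¹
                        * (((W:ℝ≥0∞)^Q)⁻¹ * (W:ℝ≥0∞)^Q) := by ring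
                    _ = (W:ℝ≥0∞)^(2*W+1) * (W:ℝ≥0∞) * ((2:ℝ≥0∞)^(Q+1))⁻¹ := by
                        rw [ENNReal.inv_mul_cancel hQne0 hQnetop, mul_one]
          calc ((Q:ℝ≥0∞)+1) * (5 * ((N:ℝ≥0∞))⁻¹)
              * (((W:ℝ≥0∞)^(2*W+1) * ((W:ℝ≥0∞)^Q)⁻¹) * c0E^(Q+1))
              = (5 * ((N:ℝ≥0∞))⁻¹) * (((Q:ℝ≥0∞)+1)
                * (((W:ℝ≥0∞)^(2*W+1) * ((W:ℝ≥0∞)^Q)⁻¹) * c0E^(Q+1))) := by ring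
            _ ≤ (5 * ((N:ℝ≥0∞))⁻¹) * ((W:ℝ≥0∞)^(2*W+2) * ((2:ℝ≥0∞)^(Q+1))⁻¹) :=
                mul_le_mul' (le_refl _) hmain
            _ = 5 * ((N:ℝ≥0∞))⁻¹ * (W:ℝ≥0∞)^(2*W+2) * ((2:ℝ≥0∞)^(Q+1))⁻¹ := by ring
  -- final assembly
  have hgeo : ∑' Q : ℕ, ((2:ℝ≥0∞)^(Q+1))⁻¹ ≤ 2 := by
    calc ∑' Q : ℕ, ((2:ℝ≥0∞)^(Q+1))⁻¹
        ≤ ∑' Q : ℕ, ((2:ℝ≥0∞)⁻¹)^Q := by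
          apply ENNReal.tsum_le_tsum
          intro Q
          calc ((2:ℝ≥0∞)^(Q+1))⁻¹ = ((2:ℝ≥0∞)⁻¹)^(Q+1) := by rw [ENNReal.inv_pow]
            _ ≤ ((2:ℝ≥0∞)⁻¹)^Q := pow_le_pow_of_le_one zero_le
                (ENNReal.inv_le_one.mpr one_le_two) (Nat.le_succ Q)
      _ = (1 - 2⁻¹)⁻¹ := ENNReal.tsum_geometric _
      _ = 2 := by rw [ENNReal.one_sub_inv_two, inv_inv]
  calc ∑' i : Idx, pbound N i
      = ∑' (Q : ℕ) (x : (Fin (Q+1) → ℤ) × ((Fin (Q+1) → ℤ) × ℤ)), pbound N ⟨Q, x⟩ := by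
        rw [← ENNReal.tsum_sigma (f := fun Q x => pbound N ⟨Q, x⟩)]
        rfl
    _ = ∑' (Q : ℕ) (m : Fin (Q+1) → ℤ) (h : Fin (Q+1) → ℤ) (a : ℤ),
          pbound N ⟨Q, (m, h, a)⟩ := by
        apply tsum_congr
        intro Q
        rw [ENNReal.tsum_prod (f := fun m y => pbound N ⟨Q, (m, y)⟩)]
        apply tsum_congr
        intro m
        rw [ENNReal.tsum_prod (f := fun h a => pbound N ⟨Q, (m, h, a)⟩)]
    _ ≤ ∑' Q : ℕ, 5 * ((N:ℝ≥0∞))⁻¹ * (W:ℝ≥0∞)^(2*W+2) * ((2:ℝ≥0∞)^(Q+1))⁻¹ :=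
        ENNReal.tsum_le_tsum (fun Q => hQbound Q)
    _ = 5 * ((N:ℝ≥0∞))⁻¹ * (W:ℝ≥0∞)^(2*W+2) * ∑' Q : ℕ, ((2:ℝ≥0∞)^(Q+1))⁻¹ := by
        rw [ENNReal.tsum_mul_left]
    _ ≤ 5 * ((N:ℝ≥0∞))⁻¹ * (W:ℝ≥0∞)^(2*W+2) * 2 := mul_le_mul' (le_refl _) hgeo
    _ = 10 * (W:ℝ≥0∞)^(2*W+2) * ((N:ℝ≥0∞))⁻¹ := by ring

lemma tail_sum (μ : Measure Ω) [IsProbabilityMeasure μ]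
    (X : ℤ → Ω → ℝ) (hmeas : ∀ k, Measurable (X k))
    (hgauss : ∀ k, μ.map (X k) = ProbabilityTheory.gaussianReal 0 1) :
    ∃ C : ℝ≥0∞, C ≠ ⊤ ∧ ∀ N : ℕ, 1 ≤ N →
      (∑' k : ℤ, μ (Tail X N k)) ≤ C * ((N:ℝ≥0∞))⁻¹ := by
  refine ⟨6 * ∑' k : ℤ, ENNReal.ofReal (((1:ℝ) + (k:ℝ)^2)⁻¹),
    ENNReal.mul_ne_top (by norm_num) (ne_of_lt tsum_ch_lt_top), ?_⟩
  intro N hN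
  have hNposR : (0:ℝ) < (N:ℝ) := by exact_mod_cast Nat.pos_of_ne_zero (by omega)
  have hone : ∀ k : ℤ, μ (Tail X N k)
      ≤ ENNReal.ofReal 6 * (((N:ℝ≥0∞))⁻¹ * ENNReal.ofReal (((1:ℝ)+(k:ℝ)^2)⁻¹)) := by
    intro k
    set T : ℝ := (N:ℝ) * (1 + (k:ℝ)^2) with hT
    have h1k : (0:ℝ) < 1 + (k:ℝ)^2 := by positivity
    have hTpos : 0 < T := by rw [hT]; positivity
    have hs : MeasurableSet {x : ℝ | T < |x|} :=
      measurableSet_lt measurable_const (measurable_id.abs)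
    have hmap : μ (Tail X N k) = (μ.map (X k)) {x | T < |x|} :=
      (Measure.map_apply (hmeas k) hs).symm
    have hexp : rexp (-T) ≤ T⁻¹ := by
      rw [Real.exp_neg]
      apply inv_anti₀ hTpos
      linarith [Real.add_one_le_exp T]
    calc μ (Tail X N k) = (μ.map (X k)) {x | T < |x|} := hmap
      _ ≤ ENNReal.ofReal (6 * rexp (-T)) := by
          rw [hgauss k]
          exact gaussian_tail (le_of_lt hTpos)
      _ ≤ ENNReal.ofReal (6 * T⁻¹) := by
          apply ENNReal.ofReal_le_ofReal
          nlinarith [hexp]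
      _ = ENNReal.ofReal 6 * (((N:ℝ≥0∞))⁻¹ * ENNReal.ofReal (((1:ℝ)+(k:ℝ)^2)⁻¹)) := by
          rw [ENNReal.ofReal_mul (by norm_num)]
          congr 1
          rw [hT, mul_inv, ENNReal.ofReal_mul (by positivity)]
          congr 1
          rw [ENNReal.ofReal_inv_of_pos hNposR, ENNReal.ofReal_natCast]
  calc (∑' k : ℤ, μ (Tail X N k))
      ≤ ∑' k : ℤ, ENNReal.ofReal 6 * (((N:ℝ≥0∞))⁻¹ * ENNReal.ofReal (((1:ℝ)+(k:ℝ)^2)⁻¹)) :=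
        ENNReal.tsum_le_tsum hone
    _ = ENNReal.ofReal 6 * (((N:ℝ≥0∞))⁻¹ * ∑' k : ℤ, ENNReal.ofReal (((1:ℝ)+(k:ℝ)^2)⁻¹)) := by
        rw [ENNReal.tsum_mul_left, ENNReal.tsum_mul_left]
    _ = (6 * ∑' k : ℤ, ENNReal.ofReal (((1:ℝ) + (k:ℝ)^2)⁻¹)) * ((N:ℝ≥0∞))⁻¹ := by
        rw [show ENNReal.ofReal 6 = (6:ℝ≥0∞) by
          rw [show (6:ℝ) = ((6:ℕ):ℝ) by norm_num, ENNReal.ofReal_natCast]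
          norm_num]
        ring
end
end Stmt15Aux

open MeasureTheory

/-- almost surely, the randomized frequencies
`ω_k = k² + X_k ⟨k⟩^{-s_*}` satisfy a weak non-resonance estimate. -/
theorem stmt_15 (s : ℝ) (hs : 0 < s) {Ω : Type*} [MeasurableSpace Ω]
    (μ : Measure Ω) [IsProbabilityMeasure μ]
    (X : ℤ → Ω → ℝ) (hmeas : ∀ k, Measurable (X k))
    (hindep : ProbabilityTheory.iIndepFun X μ)
    (hgauss : ∀ k, μ.map (X k) = ProbabilityTheory.gaussianReal 0 1) :
    ∀ᵐ ω ∂μ, ∃ γ > (0 : ℝ), ∀ (q : ℕ) (hq : 1 ≤ q) (m : Fin q → ℤ),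
      (∀ j, m j ≠ 0) → ∀ h : Fin q → ℤ, Function.Injective h → ∀ a : ℤ,
      γ * (Finset.univ.inf' ⟨⟨0, hq⟩, Finset.mem_univ _⟩
            fun j => Real.sqrt (1 + (h j : ℝ) ^ 2)) ^ (-s) *
          ∏ j, (((m j : ℝ) ^ 2) ^ (-2 : ℝ) * ((1 + (h j : ℝ) ^ 2) ^ (-2 : ℝ)))
        ≤ |(a : ℝ) + ∑ j, (m j : ℝ) *
            ((h j : ℝ) ^ 2 + X (h j) ω * Real.sqrt (1 + (h j : ℝ) ^ 2) ^ (-s))| := by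
  classical
  obtain ⟨C1, hC1top, hC1⟩ := Stmt15Aux.master_sum
  obtain ⟨C2, hC2top, hC2⟩ := Stmt15Aux.tail_sum μ X hmeas hgauss
  set BadAll : ℕ → Set Ω := fun n =>
    (⋃ i : Stmt15Aux.Idx, Stmt15Aux.Bad s X (n+1) i) ∪
    (⋃ k : ℤ, Stmt15Aux.Tail X (n+1) k) with hBA
  have hBAbound : ∀ n : ℕ, μ (BadAll n) ≤ (C1 + C2) * (((n+1:ℕ):ℝ≥0∞))⁻¹ := by
    intro n
    calc μ (BadAll n)
        ≤ μ (⋃ i : Stmt15Aux.Idx, Stmt15Aux.Bad s X (n+1) i)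
          + μ (⋃ k : ℤ, Stmt15Aux.Tail X (n+1) k) := measure_union_le _ _
      _ ≤ (∑' i : Stmt15Aux.Idx, μ (Stmt15Aux.Bad s X (n+1) i))
          + ∑' k : ℤ, μ (Stmt15Aux.Tail X (n+1) k) :=
          add_le_add (measure_iUnion_le _) (measure_iUnion_le _)
      _ ≤ (∑' i : Stmt15Aux.Idx, Stmt15Aux.pbound (n+1) i)
          + ∑' k : ℤ, μ (Stmt15Aux.Tail X (n+1) k) := by
          apply add_le_add _ (le_refl _)
          exact ENNReal.tsum_le_tsum
            (fun i => Stmt15Aux.bad_prob s μ X hmeas hindep hgauss (n+1) i)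
      _ ≤ C1 * (((n+1:ℕ):ℝ≥0∞))⁻¹ + C2 * (((n+1:ℕ):ℝ≥0∞))⁻¹ :=
          add_le_add (hC1 (n+1) (by omega)) (hC2 (n+1) (by omega))
      _ = (C1 + C2) * (((n+1:ℕ):ℝ≥0∞))⁻¹ := by ring
  set S : Set Ω := ⋂ n : ℕ, BadAll n with hSdef
  have hS0 : μ S = 0 := by
    have hle : ∀ n : ℕ, μ S ≤ (C1 + C2) * (((n+1:ℕ):ℝ≥0∞))⁻¹ := fun n =>
      le_trans (measure_mono (Set.iInter_subset _ n)) (hBAbound n)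
    have h1 : Filter.Tendsto (fun n : ℕ => (((n+1:ℕ):ℝ≥0∞))⁻¹)
        Filter.atTop (nhds 0) := by
      have h0 : Filter.Tendsto (fun n : ℕ => ((n:ℕ):ℝ≥0∞)⁻¹) Filter.atTop (nhds 0) :=
        ENNReal.tendsto_inv_nat_nhds_zero
      exact (Filter.tendsto_add_atTop_iff_nat 1).mpr h0
    have htend : Filter.Tendsto (fun n : ℕ => (C1 + C2) * (((n+1:ℕ):ℝ≥0∞))⁻¹)
        Filter.atTop (nhds 0) := by
      have := ENNReal.Tendsto.const_mul (a := C1 + C2) h1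
        (Or.inr (ENNReal.add_ne_top.mpr ⟨hC1top, hC2top⟩))
      simpa using this
    have hfin := ge_of_tendsto' htend hle
    exact le_antisymm hfin zero_le
  have hae : ∀ᵐ ω ∂μ, ω ∉ S := measure_eq_zero_iff_ae_notMem.mp hS0
  filter_upwards [hae] with ω hω
  rw [hSdef, Set.mem_iInter] at hω
  push_neg at hω
  obtain ⟨n, hn⟩ := hω
  rw [hBA] at hn
  simp only [Set.mem_union, Set.mem_iUnion, not_or, not_exists] at hn
  obtain ⟨hnB, hnT⟩ := hn
  refine ⟨(((n+1:ℕ)):ℝ)⁻¹^2, by positivity, ?_⟩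
  exact Stmt15Aux.good_pointwise s hs X (n+1) (by omega) ω hnB hnT
end

section
/- For any dyadic integers $K_1, K_2 \geq 1$, any $\tau \in \mathbb{R}$ and $k \in \mathbb{Z}$, the set $A_{\tau,k} = \{(\tau_1,k_1) \in \mathbb{R}\times\mathbb{Z} : \langle\tau_1 - k_1^2\rangle \sim K_1,\ \langle\tau-\tau_1-(k-k_1)^2\rangle \sim K_2\}$ has product measure (Lebesgue in $\tau_1$ times counting in $k_1$) bounded by $C\min(K_1,K_2)\max(K_1,K_2)^{1/2}$ for a universal constant $C$. -/
open MeasureTheory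

lemma int_card_Icc_le_aux (c d : ℝ) (hcd : c ≤ d) :
    ((Finset.Icc ⌈c⌉ ⌊d⌋).card : ℝ) ≤ d - c + 1 := by
  rw [Int.card_Icc]
  rcases le_or_gt (⌊d⌋ + 1 - ⌈c⌉) 0 with h | h
  · rw [Int.toNat_of_nonpos h]
    push_cast
    linarith
  · have h1 : (((⌊d⌋ + 1 - ⌈c⌉).toNat : ℤ) : ℝ) = ((⌊d⌋ : ℝ) + 1 - ⌈c⌉) := by
      rw [Int.toNat_of_nonneg h.le]; push_cast; ring
    push_cast at h1 ⊢
    have h2 : (⌊d⌋ : ℝ) ≤ d := Int.floor_le d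
    have h3 : c ≤ (⌈c⌉ : ℝ) := Int.le_ceil c
    linarith

lemma abs_le_of_sqrt_le (x K : ℝ) (h : Real.sqrt (1 + x ^ 2) ≤ 2 * K) : |x| ≤ 2 * K := by
  have h1 : Real.sqrt (x ^ 2) ≤ Real.sqrt (1 + x ^ 2) := Real.sqrt_le_sqrt (by nlinarith)
  rw [Real.sqrt_sq_eq_abs] at h1
  linarith

/-- the counting bound at the heart of Bourgain's `L⁴` Strichartz
estimate on the torus: the set
`A_{τ,k} = {(τ₁,k₁) : ⟨τ₁-k₁²⟩ ∼ K₁, ⟨τ-τ₁-(k-k₁)²⟩ ∼ K₂}` has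
(Lebesgue × counting) measure at most `C min(K₁,K₂) max(K₁,K₂)^{1/2}`. -/
theorem stmt_17 :
    ∃ C : ℝ, 0 < C ∧ ∀ K₁ K₂ : ℝ, (∃ n : ℕ, K₁ = 2 ^ n) → (∃ n : ℕ, K₂ = 2 ^ n) →
      ∀ (τ : ℝ) (k : ℤ),
        (volume.prod Measure.count)
            {p : ℝ × ℤ |
              (K₁ ≤ Real.sqrt (1 + (p.1 - (p.2 : ℝ) ^ 2) ^ 2) ∧
                Real.sqrt (1 + (p.1 - (p.2 : ℝ) ^ 2) ^ 2) ≤ 2 * K₁) ∧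
              (K₂ ≤ Real.sqrt (1 + (τ - p.1 - ((k : ℝ) - (p.2 : ℝ)) ^ 2) ^ 2) ∧
                Real.sqrt (1 + (τ - p.1 - ((k : ℝ) - (p.2 : ℝ)) ^ 2) ^ 2) ≤ 2 * K₂)}
          ≤ ENNReal.ofReal (C * min K₁ K₂ * Real.sqrt (max K₁ K₂)) := by
  haveI : SFinite (Measure.count : Measure ℤ) := by
    unfold Measure.count
    exact sfinite_sum_of_countable _
  refine ⟨24, by norm_num, ?_⟩
  intro K₁ K₂ hK₁ hK₂ τ k
  have hK₁1 : 1 ≤ K₁ := by obtain ⟨n, rfl⟩ := hK₁; exact one_le_pow₀ one_le_two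
  have hK₂1 : 1 ≤ K₂ := by obtain ⟨n, rfl⟩ := hK₂; exact one_le_pow₀ one_le_two
  set m := min K₁ K₂ with hm
  set M := max K₁ K₂ with hM
  have hm1 : 1 ≤ m := le_min hK₁1 hK₂1
  have hM1 : 1 ≤ M := le_trans hK₁1 (le_max_left _ _)
  have hK₁M : K₁ ≤ M := le_max_left _ _
  have hK₂M : K₂ ≤ M := le_max_right _ _
  have hsM : 1 ≤ Real.sqrt M := by
    rw [show (1 : ℝ) = Real.sqrt 1 by simp]
    exact Real.sqrt_le_sqrt hM1
  set b : ℝ := 2 * τ - (k : ℝ) ^ 2 - 8 * M with hb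
  set r₁ := Real.sqrt b with hr₁
  set r₂ := Real.sqrt (b + 16 * M) with hr₂
  have hr12 : r₁ ≤ r₂ := Real.sqrt_le_sqrt (by linarith)
  have hr2sub : r₂ ≤ r₁ + 4 * Real.sqrt M := by
    have hMsq : (Real.sqrt M) ^ 2 = M := Real.sq_sqrt (by linarith)
    have h4 : (0 : ℝ) ≤ Real.sqrt M := Real.sqrt_nonneg _
    rcases le_or_gt 0 b with hbb | hbb
    · have h1 : r₁ ^ 2 = b := Real.sq_sqrt hbb
      have h3 : (0 : ℝ) ≤ r₁ := Real.sqrt_nonneg _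
      have key : b + 16 * M ≤ (r₁ + 4 * Real.sqrt M) ^ 2 := by nlinarith
      calc r₂ ≤ Real.sqrt ((r₁ + 4 * Real.sqrt M) ^ 2) := Real.sqrt_le_sqrt key
        _ = r₁ + 4 * Real.sqrt M := Real.sqrt_sq (by positivity)
    · have h1 : r₁ = 0 := Real.sqrt_eq_zero'.mpr hbb.le
      have key : b + 16 * M ≤ (4 * Real.sqrt M) ^ 2 := by nlinarith
      calc r₂ ≤ Real.sqrt ((4 * Real.sqrt M) ^ 2) := Real.sqrt_le_sqrt key
        _ = 4 * Real.sqrt M := Real.sqrt_sq (by positivity)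
        _ ≤ r₁ + 4 * Real.sqrt M := by rw [h1]; linarith
  set T₁ : Finset ℤ := Finset.Icc ⌈((k : ℝ) - r₂) / 2⌉ ⌊((k : ℝ) - r₁) / 2⌋ with hT₁
  set T₂ : Finset ℤ := Finset.Icc ⌈((k : ℝ) + r₁) / 2⌉ ⌊((k : ℝ) + r₂) / 2⌋ with hT₂
  set T : Finset ℤ := T₁ ∪ T₂ with hT
  set a : ℤ → ℝ := fun k₁ =>
    if K₁ ≤ K₂ then (k₁ : ℝ) ^ 2 - 2 * K₁ else τ - ((k : ℝ) - (k₁ : ℝ)) ^ 2 - 2 * K₂ with ha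
  set J : ℤ → Set ℝ := fun k₁ =>
    if k₁ ∈ T then Set.Icc (a k₁) (a k₁ + 4 * m) else ∅ with hJ
  have hsub :
      {p : ℝ × ℤ |
        (K₁ ≤ Real.sqrt (1 + (p.1 - (p.2 : ℝ) ^ 2) ^ 2) ∧
          Real.sqrt (1 + (p.1 - (p.2 : ℝ) ^ 2) ^ 2) ≤ 2 * K₁) ∧
        (K₂ ≤ Real.sqrt (1 + (τ - p.1 - ((k : ℝ) - (p.2 : ℝ)) ^ 2) ^ 2) ∧
          Real.sqrt (1 + (τ - p.1 - ((k : ℝ) - (p.2 : ℝ)) ^ 2) ^ 2) ≤ 2 * K₂)}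
      ⊆ ⋃ k₁ : ℤ, (J k₁) ×ˢ ({k₁} : Set ℤ) := by
    rintro ⟨τ₁, k₁⟩ ⟨⟨_, h1⟩, ⟨_, h2⟩⟩
    have hx1 : |τ₁ - (k₁ : ℝ) ^ 2| ≤ 2 * K₁ := abs_le_of_sqrt_le _ _ h1
    have hx2 : |τ - τ₁ - ((k : ℝ) - (k₁ : ℝ)) ^ 2| ≤ 2 * K₂ := abs_le_of_sqrt_le _ _ h2
    have hsum : |τ - (k₁ : ℝ) ^ 2 - ((k : ℝ) - (k₁ : ℝ)) ^ 2| ≤ 4 * M := by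
      have heq : τ - (k₁ : ℝ) ^ 2 - ((k : ℝ) - (k₁ : ℝ)) ^ 2 =
          (τ₁ - (k₁ : ℝ) ^ 2) + (τ - τ₁ - ((k : ℝ) - (k₁ : ℝ)) ^ 2) := by ring
      rw [heq]
      calc |(τ₁ - (k₁ : ℝ) ^ 2) + (τ - τ₁ - ((k : ℝ) - (k₁ : ℝ)) ^ 2)|
          ≤ |τ₁ - (k₁ : ℝ) ^ 2| + |τ - τ₁ - ((k : ℝ) - (k₁ : ℝ)) ^ 2| := abs_add_le _ _
        _ ≤ 4 * M := by linarith
    set y : ℝ := 2 * (k₁ : ℝ) - (k : ℝ) with hy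
    have hy2 : b ≤ y ^ 2 ∧ y ^ 2 ≤ b + 16 * M := by
      have habs := abs_le.mp hsum
      constructor
      · rw [hb, hy]; nlinarith [habs.2]
      · rw [hb, hy]; nlinarith [habs.1]
    have hylb : r₁ ≤ |y| := by
      rw [← Real.sqrt_sq_eq_abs]; exact Real.sqrt_le_sqrt hy2.1
    have hyub : |y| ≤ r₂ := by
      rw [← Real.sqrt_sq_eq_abs]; exact Real.sqrt_le_sqrt hy2.2
    have hk₁T : k₁ ∈ T := by
      rcases le_or_gt 0 y with hy0 | hy0
      · rw [abs_of_nonneg hy0] at hylb hyub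
        refine Finset.mem_union_right _ ?_
        rw [hT₂, Finset.mem_Icc]
        constructor
        · exact Int.ceil_le.mpr (by rw [div_le_iff₀ (by norm_num : (0:ℝ) < 2)]; linarith)
        · exact Int.le_floor.mpr (by rw [le_div_iff₀ (by norm_num : (0:ℝ) < 2)]; linarith)
      · rw [abs_of_neg hy0] at hylb hyub
        refine Finset.mem_union_left _ ?_
        rw [hT₁, Finset.mem_Icc]
        constructor
        · exact Int.ceil_le.mpr (by rw [div_le_iff₀ (by norm_num : (0:ℝ) < 2)]; linarith)
        · exact Int.le_floor.mpr (by rw [le_div_iff₀ (by norm_num : (0:ℝ) < 2)]; linarith)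
    refine Set.mem_iUnion.mpr ⟨k₁, ?_⟩
    refine Set.mk_mem_prod ?_ rfl
    rw [hJ]
    simp only [if_pos hk₁T]
    have habs1 := abs_le.mp hx1
    have habs2 := abs_le.mp hx2
    rw [ha]
    rcases le_or_gt K₁ K₂ with h12 | h12
    · have hmm : m = K₁ := min_eq_left h12
      simp only [if_pos h12]
      rw [Set.mem_Icc]
      constructor
      · linarith [habs1.1]
      · linarith [habs1.2]
    · have hmm : m = K₂ := min_eq_right h12.le
      simp only [if_neg (not_le.mpr h12)]
      rw [Set.mem_Icc]
      constructor
      · linarith [habs2.2]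
      · linarith [habs2.1]
  have hcard : (T.card : ℝ) ≤ 6 * Real.sqrt M := by
    have hc1 : (T₁.card : ℝ) ≤ 3 * Real.sqrt M := by
      have := int_card_Icc_le_aux (((k : ℝ) - r₂) / 2) (((k : ℝ) - r₁) / 2)
        (by linarith)
      calc (T₁.card : ℝ) ≤ ((k : ℝ) - r₁) / 2 - ((k : ℝ) - r₂) / 2 + 1 := this
        _ ≤ 2 * Real.sqrt M + 1 := by linarith
        _ ≤ 3 * Real.sqrt M := by linarith
    have hc2 : (T₂.card : ℝ) ≤ 3 * Real.sqrt M := by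
      have := int_card_Icc_le_aux (((k : ℝ) + r₁) / 2) (((k : ℝ) + r₂) / 2)
        (by linarith)
      calc (T₂.card : ℝ) ≤ ((k : ℝ) + r₂) / 2 - ((k : ℝ) + r₁) / 2 + 1 := this
        _ ≤ 2 * Real.sqrt M + 1 := by linarith
        _ ≤ 3 * Real.sqrt M := by linarith
    have := Finset.card_union_le T₁ T₂
    calc (T.card : ℝ) ≤ (T₁.card : ℝ) + T₂.card := by exact_mod_cast this
      _ ≤ 6 * Real.sqrt M := by linarith
  calc (volume.prod Measure.count) _
      ≤ (volume.prod Measure.count) (⋃ k₁ : ℤ, (J k₁) ×ˢ ({k₁} : Set ℤ)) :=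
        measure_mono hsub
    _ ≤ ∑' k₁ : ℤ, (volume.prod Measure.count) ((J k₁) ×ˢ ({k₁} : Set ℤ)) :=
        measure_iUnion_le _
    _ = ∑' k₁ : ℤ, volume (J k₁) := by
        refine tsum_congr fun k₁ => ?_
        rw [Measure.prod_prod, Measure.count_singleton, mul_one]
    _ = ∑ k₁ ∈ T, volume (J k₁) := by
        refine tsum_eq_sum fun k₁ hk => ?_
        rw [hJ]; simp [if_neg hk]
    _ ≤ ∑ k₁ ∈ T, ENNReal.ofReal (4 * m) := by
        refine Finset.sum_le_sum fun k₁ hk => ?_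
        rw [hJ]
        simp only [if_pos hk, Real.volume_Icc]
        exact le_of_eq (by congr 1; ring)
    _ = T.card • ENNReal.ofReal (4 * m) := Finset.sum_const _
    _ = (T.card : ENNReal) * ENNReal.ofReal (4 * m) := nsmul_eq_mul _ _
    _ ≤ ENNReal.ofReal (6 * Real.sqrt M) * ENNReal.ofReal (4 * m) := by
        refine mul_le_mul_left ?_ _
        rw [show ((T.card : ENNReal)) = ENNReal.ofReal (T.card : ℝ) by
          simp [ENNReal.ofReal_natCast]]
        exact ENNReal.ofReal_le_ofReal hcard
    _ = ENNReal.ofReal (24 * m * Real.sqrt M) := by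
        rw [← ENNReal.ofReal_mul (by positivity)]
        congr 1; ring
end
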